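/- arXiv:2205.12924 — 6 statements merged into one kernel-verified Lean document; each statement's English description precedes it below -/
import Mathlib

section
/- Let the data X_1, X_2, … be i.i.d. from a finite mixture P = Σ_{j=1}^t p_j R_j with t ≥ 1 components, and let the Dirichlet process mixture model have kernel density k(·|θ), base density q0, and prior π on the concentration parameter satisfying A1 and A2. Define the posterior distribution of α given x_{1:n} as the probability measure on (0,∞) with density proportional to π(α) · Σ_{s=1}^n (α^s/α^{(n)}) Σ_{A={A_1,…,A_s}∈τ_s(n)} ∏_{j=1}^s (|A_j|−1)! m(x_{A_j}). If pr(K_n = t | X_{1:n}) → 1 in probability as n → ∞, then for every ε > 0 the posterior probability pr(α < ε | X_{1:n}) converges to 1 in probability as n → ∞ (i.e., the posterior of α converges weakly to the point mass at 0, in probability). -/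
open MeasureTheory Filter Topology
open scoped Classical BigOperators ENNReal

noncomputable section

/-- A finite set of blocks forming a partition of `Fin n` (i.e. of `{1,…,n}`). -/
def IsPartitionOf {n : ℕ} (P : Finset (Finset (Fin n))) : Prop :=
  (∀ B ∈ P, B.Nonempty) ∧ ∀ i : Fin n, ∃! B : Finset (Fin n), B ∈ P ∧ i ∈ B

/-- `τ_s(n)`: the partitions of `{1,…,n}` into `s` nonempty blocks. -/
def partitionsInto (n s : ℕ) : Finset (Finset (Finset (Fin n))) :=
  Finset.univ.filter fun P => IsPartitionOf P ∧ P.card = s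

/-- Ascending factorial `α^{(n)} = α (α+1) ⋯ (α+n−1)`. -/
def ascFactorial (α : ℝ) (n : ℕ) : ℝ := ∏ i ∈ Finset.range n, (α + (i : ℝ))

/-- Marginal likelihood `m(x_B)` of the observations in block `B`, for kernel `k(·|θ)`
(written `k x θ`) and base density `q0`. -/
def clusterMarginal (k : ℝ → ℝ → ℝ) (q0 : ℝ → ℝ) {n : ℕ} (x : Fin n → ℝ)
    (B : Finset (Fin n)) : ℝ :=
  ∫ θ : ℝ, (∏ i ∈ B, k (x i) θ) * q0 θ

/-- `Σ_{A={A_1,…,A_s}∈τ_s(n)} ∏_j (|A_j|−1)! · m(x_{A_j})`. -/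
def clusterWeight (k : ℝ → ℝ → ℝ) (q0 : ℝ → ℝ) (n s : ℕ) (x : Fin n → ℝ) : ℝ :=
  ∑ P ∈ partitionsInto n s, ∏ B ∈ P, (((B.card - 1).factorial : ℝ) * clusterMarginal k q0 x B)

/-- `∫_0^∞ α^s/α^{(n)} π(α) dα`. -/
def priorCoeff (π : ℝ → ℝ) (n s : ℕ) : ℝ :=
  ∫ α in Set.Ioi (0:ℝ), α ^ s / ascFactorial α n * π α

/-- Unnormalized posterior weight `P_n(s)` on the number of clusters. -/
def Pn (π : ℝ → ℝ) (k : ℝ → ℝ → ℝ) (q0 : ℝ → ℝ) (n s : ℕ) (x : Fin n → ℝ) : ℝ :=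
  priorCoeff π n s * clusterWeight k q0 n s x

/-- Posterior probability `pr(K_n = s | x_{1:n}) = P_n(s)/Σ_{r=1}^n P_n(r)`. -/
def postK (π : ℝ → ℝ) (k : ℝ → ℝ → ℝ) (q0 : ℝ → ℝ) (n s : ℕ) (x : Fin n → ℝ) : ℝ :=
  Pn π k q0 n s x / ∑ r ∈ Finset.Icc 1 n, Pn π k q0 n r x

/-- (A1): `π` is a probability density on `(0,∞)`. -/
def IsPriorDensity (π : ℝ → ℝ) : Prop :=
  Measurable π ∧ (∀ α, 0 ≤ π α) ∧ (∫ α in Set.Ioi (0:ℝ), π α) = 1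

/-- (A2): polynomial behaviour of `π` near the origin, with constants `ε ∈ (0,1)`,
`δ > 0`, `β > 0`. -/
def PolyAtZero (π : ℝ → ℝ) (ε δ β : ℝ) : Prop :=
  ε ∈ Set.Ioo (0:ℝ) 1 ∧ 0 < δ ∧ 0 < β ∧
    ∀ α ∈ Set.Ioo (0:ℝ) ε, δ⁻¹ * α ^ β ≤ π α ∧ π α ≤ δ * α ^ β

/-- (A3): subfactorial moments with parameter `ρ`:
`∫_0^∞ α^s π(α) dα ≤ D ρ^{−s} Γ(ν+s+1)` for all integers `s ≥ 1`. -/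
def SubfactorialMoments (π : ℝ → ℝ) (ρ : ℝ) : Prop :=
  ∃ D ν : ℝ, 0 < D ∧ 0 < ν ∧ ∀ s : ℕ, 1 ≤ s →
    (∫ α in Set.Ioi (0:ℝ), α ^ s * π α) ≤ D * ρ⁻¹ ^ s * Real.Gamma (ν + (s : ℝ) + 1)

/-- A probability density on `ℝ` (w.r.t. Lebesgue measure). -/
def IsDensity (f : ℝ → ℝ) : Prop :=
  Measurable f ∧ (∀ x, 0 ≤ f x) ∧ (∫ x, f x) = 1

/-- `X` is an i.i.d. sequence on `(Ω,μ)` with common density `f` (w.r.t. Lebesgue). -/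
def IsIIDWithDensity (Ω : Type) [MeasurableSpace Ω] (μ : Measure Ω)
    (X : ℕ → Ω → ℝ) (f : ℝ → ℝ) : Prop :=
  (∀ i, Measurable (X i)) ∧
  ProbabilityTheory.iIndepFun X μ ∧
  ∀ i, Measure.map (X i) μ = volume.withDensity fun x => ENNReal.ofReal (f x)

/-- Posterior probability that the concentration parameter is below `ε`:
`pr(α < ε | x_{1:n})`, where the posterior of `α` has density proportional to
`π(α) Σ_{s=1}^n (α^s/α^{(n)}) Σ_{A∈τ_s(n)} ∏_j (|A_j|−1)! m(x_{A_j})` on `(0,∞)`. -/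
def postAlphaBelow (π : ℝ → ℝ) (k : ℝ → ℝ → ℝ) (q0 : ℝ → ℝ) (n : ℕ)
    (x : Fin n → ℝ) (ε : ℝ) : ℝ :=
  (∫ α in Set.Ioo (0:ℝ) ε,
      π α * ∑ s ∈ Finset.Icc 1 n, α ^ s / ascFactorial α n * clusterWeight k q0 n s x) /
  (∫ α in Set.Ioi (0:ℝ),
      π α * ∑ s ∈ Finset.Icc 1 n, α ^ s / ascFactorial α n * clusterWeight k q0 n s x)

section DPMAux

open Set

/-! ### Auxiliary lemmas on the ascending factorial -/

lemma dpm_asc_pos {α : ℝ} (hα : 0 < α) (n : ℕ) : 0 < ascFactorial α n :=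
  Finset.prod_pos fun i _ => by positivity

lemma dpm_asc_split (α : ℝ) {t n : ℕ} (h : t ≤ n) :
    ascFactorial α n
      = (∏ i ∈ Finset.range t, (α + (i : ℝ))) * ∏ i ∈ Finset.Ico t n, (α + (i : ℝ)) := by
  rw [ascFactorial, Finset.range_eq_Ico, ← Finset.prod_Ico_consecutive _ (Nat.zero_le t) h,
    ← Finset.range_eq_Ico]

lemma dpm_pow_le_prod {α : ℝ} (hα : 0 < α) (t : ℕ) :
    α ^ t ≤ ∏ i ∈ Finset.range t, (α + (i : ℝ)) := by
  calc α ^ t = ∏ _i ∈ Finset.range t, α := by rw [Finset.prod_const, Finset.card_range]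
    _ ≤ ∏ i ∈ Finset.range t, (α + (i : ℝ)) :=
        Finset.prod_le_prod (fun i _ => hα.le)
          (fun i _ => le_add_of_nonneg_right (Nat.cast_nonneg i))

lemma dpm_one_le_prod_Ico {α : ℝ} (hα : 0 < α) {t n : ℕ} (ht : 1 ≤ t) :
    1 ≤ ∏ i ∈ Finset.Ico t n, (α + (i : ℝ)) := by
  calc (1:ℝ) = ∏ _i ∈ Finset.Ico t n, (1:ℝ) := by rw [Finset.prod_const_one]
    _ ≤ ∏ i ∈ Finset.Ico t n, (α + (i : ℝ)) := by
        apply Finset.prod_le_prod (fun i _ => zero_le_one)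
        intro i hi
        have h1 : (1 : ℝ) ≤ (i : ℝ) := by
          exact_mod_cast le_trans ht (Finset.mem_Ico.1 hi).1
        linarith

lemma dpm_pow_le_asc {α : ℝ} (hα : 0 < α) {s n : ℕ} (hs : 1 ≤ s) (hn : s ≤ n) :
    α ^ s ≤ ascFactorial α n := by
  rw [dpm_asc_split α hn]
  exact le_trans (dpm_pow_le_prod hα s)
    (le_mul_of_one_le_right (Finset.prod_nonneg fun i _ => by positivity)
      (dpm_one_le_prod_Ico hα hs))

lemma dpm_ratio_le_one {α : ℝ} (hα : 0 < α) {s n : ℕ} (hs : 1 ≤ s) (hn : s ≤ n) :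
    α ^ s / ascFactorial α n ≤ 1 :=
  (div_le_one (dpm_asc_pos hα n)).2 (dpm_pow_le_asc hα hs hn)

lemma dpm_ratio_nonneg {α : ℝ} (hα : 0 < α) (s n : ℕ) :
    0 ≤ α ^ s / ascFactorial α n :=
  div_nonneg (pow_nonneg hα.le s) (dpm_asc_pos hα n).le

lemma dpm_measurable_ratio (s n : ℕ) :
    Measurable fun α : ℝ => α ^ s / ascFactorial α n := by
  apply Measurable.div (measurable_id.pow_const s)
  exact Finset.measurable_prod _ fun i _ => measurable_id.add_const _

lemma dpm_ratio_le_on_Ici {ε α : ℝ} (hε : 0 < ε) (hα : ε ≤ α) {t n : ℕ} (hn : t ≤ n) :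
    α ^ t / ascFactorial α n ≤ (∏ i ∈ Finset.Ico t n, (ε + (i : ℝ)))⁻¹ := by
  have hα0 : 0 < α := lt_of_lt_of_le hε hα
  have hPε : 0 < ∏ i ∈ Finset.Ico t n, (ε + (i : ℝ)) :=
    Finset.prod_pos fun i _ => by positivity
  have hPα : ∏ i ∈ Finset.Ico t n, (ε + (i : ℝ)) ≤ ∏ i ∈ Finset.Ico t n, (α + (i : ℝ)) :=
    Finset.prod_le_prod (fun i _ => by positivity) (fun i _ => by gcongr)
  have h1 : α ^ t * ∏ i ∈ Finset.Ico t n, (ε + (i : ℝ)) ≤ ascFactorial α n := by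
    rw [dpm_asc_split α hn]
    exact mul_le_mul (dpm_pow_le_prod hα0 t) hPα hPε.le
      (Finset.prod_nonneg fun i _ => by positivity)
  rw [div_le_iff₀ (dpm_asc_pos hα0 n), inv_mul_eq_div, le_div_iff₀ hPε]
  exact h1

/-! ### Integrability -/

lemma dpm_integrableOn_pi {π : ℝ → ℝ} (hA1 : IsPriorDensity π) :
    IntegrableOn π (Ioi (0 : ℝ)) := by
  obtain ⟨hm, hnn, hint⟩ := hA1
  by_contra h
  rw [MeasureTheory.integral_undef h] at hint
  exact zero_ne_one hint

lemma dpm_integrableOn_f {π : ℝ → ℝ} (hA1 : IsPriorDensity π) {s n : ℕ}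
    (hs : 1 ≤ s) (hn : s ≤ n) :
    IntegrableOn (fun α => α ^ s / ascFactorial α n * π α) (Ioi (0 : ℝ)) := by
  apply MeasureTheory.Integrable.mono' (dpm_integrableOn_pi hA1)
  · exact ((dpm_measurable_ratio s n).mul hA1.1).aestronglyMeasurable
  · filter_upwards [MeasureTheory.ae_restrict_mem measurableSet_Ioi] with α hα
    have hα0 : (0 : ℝ) < α := hα
    rw [Real.norm_eq_abs,
      abs_of_nonneg (mul_nonneg (dpm_ratio_nonneg hα0 s n) (hA1.2.1 α))]
    calc α ^ s / ascFactorial α n * π α ≤ 1 * π α :=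
          mul_le_mul_of_nonneg_right (dpm_ratio_le_one hα0 hs hn) (hA1.2.1 α)
      _ = π α := one_mul _

lemma dpm_setIntegral_weighted_sum {π : ℝ → ℝ} (hA1 : IsPriorDensity π) {n : ℕ}
    (W : ℕ → ℝ) {S : Set ℝ} (hS : MeasurableSet S) (hSsub : S ⊆ Ioi (0 : ℝ)) :
    (∫ α in S, π α * ∑ s ∈ Finset.Icc 1 n, α ^ s / ascFactorial α n * W s)
      = ∑ s ∈ Finset.Icc 1 n, (∫ α in S, α ^ s / ascFactorial α n * π α) * W s := by
  have h1 : ∀ α : ℝ, π α * ∑ s ∈ Finset.Icc 1 n, α ^ s / ascFactorial α n * W s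
      = ∑ s ∈ Finset.Icc 1 n, (α ^ s / ascFactorial α n * π α) * W s := by
    intro α
    rw [Finset.mul_sum]
    exact Finset.sum_congr rfl fun s _ => by ring
  simp_rw [h1]
  rw [MeasureTheory.integral_finset_sum]
  · exact Finset.sum_congr rfl fun s _ => MeasureTheory.integral_mul_const _ _
  · intro s hs
    obtain ⟨hs1, hs2⟩ := Finset.mem_Icc.1 hs
    exact ((dpm_integrableOn_f hA1 hs1 hs2).mono_set hSsub).mul_const _

lemma dpm_setIntegral_f_nonneg {π : ℝ → ℝ} (hA1 : IsPriorDensity π) (s n : ℕ)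
    {S : Set ℝ} (hS : MeasurableSet S) (hSsub : S ⊆ Ioi (0 : ℝ)) :
    0 ≤ ∫ α in S, α ^ s / ascFactorial α n * π α :=
  MeasureTheory.setIntegral_nonneg hS fun α hα =>
    mul_nonneg (dpm_ratio_nonneg (hSsub hα) s n) (hA1.2.1 α)

lemma dpm_coeff_split {π : ℝ → ℝ} (hA1 : IsPriorDensity π) {s n : ℕ}
    (hs1 : 1 ≤ s) (hsn : s ≤ n) {ε : ℝ} (hε : 0 < ε) :
    priorCoeff π n s = (∫ α in Ioo (0 : ℝ) ε, α ^ s / ascFactorial α n * π α)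
        + ∫ α in Ici ε, α ^ s / ascFactorial α n * π α := by
  have hd : Disjoint (Ioo (0 : ℝ) ε) (Ici ε) :=
    Set.disjoint_left.2 fun a ha hb => absurd hb (not_le.2 ha.2)
  rw [priorCoeff, ← Set.Ioo_union_Ici_eq_Ioi hε]
  exact MeasureTheory.setIntegral_union hd measurableSet_Ici
    ((dpm_integrableOn_f hA1 hs1 hsn).mono_set fun a ha => ha.1)
    ((dpm_integrableOn_f hA1 hs1 hsn).mono_set fun a ha => lt_of_lt_of_le hε ha)

/-! ### Divergent sums and products -/

lemma dpm_one_add_sum_le_prod (s : Finset ℕ) (x : ℕ → ℝ) (hx : ∀ i ∈ s, 0 ≤ x i) :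
    1 + ∑ i ∈ s, x i ≤ ∏ i ∈ s, (1 + x i) := by
  classical
  induction s using Finset.cons_induction with
  | empty => simp
  | cons a s ha ih =>
    rw [Finset.sum_cons, Finset.prod_cons]
    have hxa := hx a (Finset.mem_cons_self a s)
    have hsum : 0 ≤ ∑ i ∈ s, x i :=
      Finset.sum_nonneg fun i hi => hx i (Finset.mem_cons_of_mem hi)
    have ih' := ih fun i hi => hx i (Finset.mem_cons_of_mem hi)
    nlinarith [mul_le_mul_of_nonneg_left ih' (by linarith : (0:ℝ) ≤ 1 + x a)]

lemma dpm_tendsto_sum_Ico_atTop {c : ℝ} (hc : 0 < c) (t : ℕ) :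
    Tendsto (fun n => ∑ i ∈ Finset.Ico t n, 1 / (c + (i : ℝ))) atTop atTop := by
  have key : Tendsto (fun n => ∑ i ∈ Finset.range n, 1 / (c + (i : ℝ))) atTop atTop := by
    have h1 : Tendsto (fun n => (c + 1)⁻¹ * ∑ i ∈ Finset.range n, (1 / ((i : ℝ) + 1)))
        atTop atTop :=
      Real.tendsto_sum_range_one_div_nat_succ_atTop.const_mul_atTop (by positivity)
    apply tendsto_atTop_mono _ h1
    intro n
    rw [Finset.mul_sum]
    apply Finset.sum_le_sum
    intro i _
    have hi : (0 : ℝ) ≤ i := Nat.cast_nonneg i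
    have hle : c + (i : ℝ) ≤ (c + 1) * ((i : ℝ) + 1) := by nlinarith
    calc (c + 1)⁻¹ * (1 / ((i : ℝ) + 1)) = 1 / ((c + 1) * ((i : ℝ) + 1)) := by
          rw [inv_eq_one_div, div_mul_div_comm, one_mul]
      _ ≤ 1 / (c + (i : ℝ)) := one_div_le_one_div_of_le (by positivity) hle
  have key2 : Tendsto (fun n => (∑ i ∈ Finset.range n, 1 / (c + (i : ℝ)))
      + (-(∑ i ∈ Finset.range t, 1 / (c + (i : ℝ))))) atTop atTop :=
    tendsto_atTop_add_const_right atTop _ key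
  apply key2.congr'
  filter_upwards [eventually_ge_atTop t] with n hn
  have := Finset.sum_range_add_sum_Ico (fun i => 1 / (c + (i : ℝ))) hn
  linarith

end DPMAux
section DPMAux2

open Set

/-- Key deterministic estimate: the contribution of `{α ≥ ε}` to the `t`-th prior
coefficient is eventually (in `n`) smaller than any fixed multiple of the whole
coefficient. -/
lemma dpm_tail_eventually_le {π : ℝ → ℝ} (hA1 : IsPriorDensity π)
    {ε₀ δ β : ℝ} (hA2 : PolyAtZero π ε₀ δ β)
    {t : ℕ} (ht : 1 ≤ t) {ε : ℝ} (hε : 0 < ε) {γ : ℝ} (hγ : 0 < γ) :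
    ∀ᶠ n in atTop,
      (∫ α in Ici ε, α ^ t / ascFactorial α n * π α) ≤ γ * priorCoeff π n t := by
  obtain ⟨⟨hε₀0, hε₀1⟩, hδ, hβ, hbound⟩ := hA2
  set η : ℝ := min ε₀ ε / 2 with hη_def
  have hmin0 : 0 < min ε₀ ε := lt_min hε₀0 hε
  have hη0 : 0 < η := by positivity
  have hηε₀ : η < ε₀ := lt_of_lt_of_le (by rw [hη_def]; linarith) (min_le_left _ _)
  have hηε : η < ε := lt_of_lt_of_le (by rw [hη_def]; linarith) (min_le_right _ _)
  have hη2 : 0 < η / 2 := by positivity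
  set c₀ : ℝ := (η / 2) ^ t * (δ⁻¹ * (η / 2) ^ β) * (η / 2) with hc₀
  have hrppos : 0 < (η / 2 : ℝ) ^ β := Real.rpow_pos_of_pos hη2 β
  have hc₀pos : 0 < c₀ := by
    apply mul_pos (mul_pos (pow_pos hη2 t) (mul_pos (inv_pos.2 hδ) hrppos)) hη2
  set Ct : ℝ := ∏ i ∈ Finset.range t, (η + (i : ℝ)) with hCt
  have hCtpos : 0 < Ct := Finset.prod_pos fun i _ => by positivity
  -- the divergent lower bound for the product ratio
  have hS : Tendsto (fun n => 1 + (ε - η) * ∑ i ∈ Finset.Ico t n, 1 / (η + (i : ℝ)))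
      atTop atTop := by
    apply tendsto_atTop_add_const_left
    exact (dpm_tendsto_sum_Ico_atTop hη0 t).const_mul_atTop (by linarith)
  filter_upwards [hS.eventually_ge_atTop (Ct / (γ * c₀)), eventually_ge_atTop t]
    with n hn htn
  set P1 : ℝ := ∏ i ∈ Finset.Ico t n, (ε + (i : ℝ)) with hP1def
  set P2 : ℝ := ∏ i ∈ Finset.Ico t n, (η + (i : ℝ)) with hP2def
  have hP1 : 0 < P1 := Finset.prod_pos fun i _ => by positivity
  have hP2 : 0 < P2 := Finset.prod_pos fun i _ => by positivity
  -- Step 1: the tail integral is at most `P1⁻¹`.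
  have hsub : Ici ε ⊆ Ioi (0 : ℝ) := fun a ha => lt_of_lt_of_le hε ha
  have step1 : (∫ α in Ici ε, α ^ t / ascFactorial α n * π α) ≤ P1⁻¹ := by
    have key : (∫ α in Ici ε, α ^ t / ascFactorial α n * π α)
        ≤ ∫ α in Ici ε, P1⁻¹ * π α := by
      apply MeasureTheory.setIntegral_mono_on
      · exact (dpm_integrableOn_f hA1 ht htn).mono_set hsub
      · exact ((dpm_integrableOn_pi hA1).mono_set hsub).const_mul _
      · exact measurableSet_Ici
      · intro α hα
        exact mul_le_mul_of_nonneg_right (dpm_ratio_le_on_Ici hε hα htn) (hA1.2.1 α)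
    have key2 : (∫ α in Ici ε, P1⁻¹ * π α) = P1⁻¹ * ∫ α in Ici ε, π α :=
      MeasureTheory.integral_const_mul _ _
    have key3 : (∫ α in Ici ε, π α) ≤ 1 := by
      rw [← hA1.2.2]
      apply MeasureTheory.setIntegral_mono_set (dpm_integrableOn_pi hA1)
      · filter_upwards with α using hA1.2.1 α
      · exact HasSubset.Subset.eventuallyLE hsub
    calc (∫ α in Ici ε, α ^ t / ascFactorial α n * π α) ≤ P1⁻¹ * ∫ α in Ici ε, π α := by
          rw [← key2]; exact key
      _ ≤ P1⁻¹ * 1 := mul_le_mul_of_nonneg_left key3 (inv_nonneg.2 hP1.le)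
      _ = P1⁻¹ := mul_one _
  -- Step 2: lower bound for the full coefficient.
  have step2 : c₀ / (Ct * P2) ≤ priorCoeff π n t := by
    have hCP : 0 < Ct * P2 := mul_pos hCtpos hP2
    set c : ℝ := ((η / 2) ^ t / (Ct * P2)) * (δ⁻¹ * (η / 2) ^ β) with hc
    have hsub2 : Ioo (η / 2) η ⊆ Ioi (0 : ℝ) := fun a ha => lt_trans hη2 ha.1
    have hlow : ∀ α ∈ Ioo (η / 2) η, c ≤ α ^ t / ascFactorial α n * π α := by
      intro α hα
      have hα1 : η / 2 < α := hα.1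
      have hα2 : α < η := hα.2
      have hα0 : 0 < α := lt_trans hη2 hα1
      have hπ : δ⁻¹ * α ^ β ≤ π α := (hbound α ⟨hα0, lt_trans hα2 hηε₀⟩).1
      have hrp : (η / 2 : ℝ) ^ β ≤ α ^ β := Real.rpow_le_rpow hη2.le hα1.le hβ.le
      have hπ2 : δ⁻¹ * (η / 2) ^ β ≤ π α :=
        le_trans (mul_le_mul_of_nonneg_left hrp (inv_nonneg.2 hδ.le)) hπ
      have hasc : ascFactorial α n ≤ Ct * P2 := by
        rw [dpm_asc_split α htn]
        apply mul_le_mul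
        · exact Finset.prod_le_prod (fun i _ => by positivity) (fun i _ => by linarith)
        · exact Finset.prod_le_prod (fun i _ => by positivity) (fun i _ => by linarith)
        · exact Finset.prod_nonneg fun i _ => by positivity
        · exact hCtpos.le
      have hpow : (η / 2 : ℝ) ^ t ≤ α ^ t := pow_le_pow_left₀ hη2.le hα1.le t
      have hratio : (η / 2) ^ t / (Ct * P2) ≤ α ^ t / ascFactorial α n :=
        div_le_div₀ (pow_nonneg hα0.le t) hpow (dpm_asc_pos hα0 n) hasc
      calc c ≤ (α ^ t / ascFactorial α n) * (δ⁻¹ * (η / 2) ^ β) :=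
            mul_le_mul_of_nonneg_right hratio (by positivity)
        _ ≤ (α ^ t / ascFactorial α n) * π α :=
            mul_le_mul_of_nonneg_left hπ2 (dpm_ratio_nonneg hα0 t n)
    have hμ : (volume (Ioo (η / 2) η)).toReal = η / 2 := by
      rw [Real.volume_Ioo, ENNReal.toReal_ofReal (by linarith)]
      ring
    have hint2 : c * (η / 2)
        ≤ ∫ α in Ioo (η / 2) η, α ^ t / ascFactorial α n * π α := by
      have h := MeasureTheory.setIntegral_ge_of_const_le (μ := volume)
        (f := fun α => α ^ t / ascFactorial α n * π α) (c := c) measurableSet_Ioo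
        (by rw [Real.volume_Ioo]; exact ENNReal.ofReal_ne_top) hlow
        ((dpm_integrableOn_f hA1 ht htn).mono_set hsub2)
      rwa [measureReal_def, hμ, smul_eq_mul, mul_comm] at h
    have hmono : (∫ α in Ioo (η / 2) η, α ^ t / ascFactorial α n * π α)
        ≤ priorCoeff π n t := by
      rw [priorCoeff]
      apply MeasureTheory.setIntegral_mono_set (dpm_integrableOn_f hA1 ht htn)
      · filter_upwards [MeasureTheory.ae_restrict_mem measurableSet_Ioi] with α hα
        exact mul_nonneg (dpm_ratio_nonneg hα t n) (hA1.2.1 α)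
      · exact HasSubset.Subset.eventuallyLE hsub2
    have heq : c₀ / (Ct * P2) = c * (η / 2) := by
      rw [hc, hc₀]; field_simp
    rw [heq]
    exact le_trans hint2 hmono
  -- Step 3: `P2 * (1 + S) ≤ P1`.
  have step3 : P2 * (1 + (ε - η) * ∑ i ∈ Finset.Ico t n, 1 / (η + (i : ℝ))) ≤ P1 := by
    have hfac : ∀ i ∈ Finset.Ico t n,
        (ε + (i : ℝ)) = (η + (i : ℝ)) * (1 + (ε - η) * (1 / (η + (i : ℝ)))) := by
      intro i _
      have h0 : (0 : ℝ) < η + (i : ℝ) := by positivity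
      field_simp
      ring
    have hP1eq : P1 = P2 * ∏ i ∈ Finset.Ico t n, (1 + (ε - η) * (1 / (η + (i : ℝ)))) := by
      rw [hP1def, hP2def, ← Finset.prod_mul_distrib]
      exact Finset.prod_congr rfl hfac
    have h := dpm_one_add_sum_le_prod (Finset.Ico t n)
      (fun i => (ε - η) * (1 / (η + (i : ℝ)))) (fun i _ => by
        have : (0:ℝ) < η + (i:ℝ) := by positivity
        have : (0:ℝ) ≤ ε - η := by linarith
        positivity)
    rw [hP1eq]
    apply mul_le_mul_of_nonneg_left _ hP2.le
    calc 1 + (ε - η) * ∑ i ∈ Finset.Ico t n, 1 / (η + (i : ℝ))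
        = 1 + ∑ i ∈ Finset.Ico t n, (ε - η) * (1 / (η + (i : ℝ))) := by
          rw [Finset.mul_sum]
      _ ≤ _ := h
  -- Combine.
  have hγc₀ : 0 < γ * c₀ := mul_pos hγ hc₀pos
  have hP1big : Ct * P2 / (γ * c₀) ≤ P1 := by
    calc Ct * P2 / (γ * c₀) = P2 * (Ct / (γ * c₀)) := by ring
      _ ≤ P2 * (1 + (ε - η) * ∑ i ∈ Finset.Ico t n, 1 / (η + (i : ℝ))) :=
          mul_le_mul_of_nonneg_left hn hP2.le
      _ ≤ P1 := step3
  have hfin : P1⁻¹ ≤ γ * (c₀ / (Ct * P2)) := by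
    have hCP : 0 < Ct * P2 := mul_pos hCtpos hP2
    have h1 : Ct * P2 ≤ P1 * (γ * c₀) := by
      have := (div_le_iff₀ hγc₀).1 hP1big
      linarith
    rw [inv_eq_one_div, ← mul_div_assoc, div_le_div_iff₀ hP1 hCP, one_mul]
    exact h1.trans_eq (by ring)
  calc (∫ α in Ici ε, α ^ t / ascFactorial α n * π α) ≤ P1⁻¹ := step1
    _ ≤ γ * (c₀ / (Ct * P2)) := hfin
    _ ≤ γ * priorCoeff π n t := mul_le_mul_of_nonneg_left step2 hγ.le

end DPMAux2
section DPMAux3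

open Set

lemma dpm_clusterWeight_nonneg {k : ℝ → ℝ → ℝ} (hknn : ∀ x θ, 0 ≤ k x θ)
    {q0 : ℝ → ℝ} (hq0 : ∀ θ, 0 ≤ q0 θ) (n s : ℕ) (x : Fin n → ℝ) :
    0 ≤ clusterWeight k q0 n s x := by
  apply Finset.sum_nonneg
  intro P _
  apply Finset.prod_nonneg
  intro B _
  apply mul_nonneg (Nat.cast_nonneg _)
  apply MeasureTheory.integral_nonneg
  intro θ
  exact mul_nonneg (Finset.prod_nonneg fun i _ => hknn _ _) (hq0 θ)

/-- Deterministic bound: if the posterior on the number of clusters is close to `1` at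
`t` and the tail estimate for the `t`-th coefficient holds, then the posterior mass of
`{α < ε}` is close to `1`. -/
lemma dpm_key_bound {π : ℝ → ℝ} (hA1 : IsPriorDensity π)
    {k : ℝ → ℝ → ℝ} (hknn : ∀ x θ, 0 ≤ k x θ) {q0 : ℝ → ℝ} (hq0 : ∀ θ, 0 ≤ q0 θ)
    {t n : ℕ} (ht1 : 1 ≤ t) (htn : t ≤ n) {ε γ : ℝ} (hε : 0 < ε) (hγ : 0 < γ)
    (htail : (∫ α in Ici ε, α ^ t / ascFactorial α n * π α) ≤ γ * priorCoeff π n t)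
    (x : Fin n → ℝ) (hq : 1 / 2 < postK π k q0 n t x) :
    |postAlphaBelow π k q0 n x ε - 1| ≤ γ + |postK π k q0 n t x - 1| := by
  set W : ℕ → ℝ := fun s => clusterWeight k q0 n s x with hW_def
  have hW : ∀ s, 0 ≤ W s := fun s => dpm_clusterWeight_nonneg hknn hq0 n s x
  set D : ℝ := ∑ r ∈ Finset.Icc 1 n, Pn π k q0 n r x with hD_def
  have hcoeff_nonneg : ∀ s, s ∈ Finset.Icc 1 n → 0 ≤ priorCoeff π n s := by
    intro s hs
    exact dpm_setIntegral_f_nonneg hA1 s n measurableSet_Ioi subset_rfl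
  have hPn_nonneg : ∀ r ∈ Finset.Icc 1 n, 0 ≤ Pn π k q0 n r x := fun r hr =>
    mul_nonneg (hcoeff_nonneg r hr) (hW r)
  have hD_nonneg : 0 ≤ D := Finset.sum_nonneg hPn_nonneg
  have hDpos : 0 < D := by
    rcases eq_or_lt_of_le hD_nonneg with h | h
    · exfalso
      rw [postK, ← hD_def, ← h, div_zero] at hq
      linarith
    · exact h
  have htmem : t ∈ Finset.Icc 1 n := Finset.mem_Icc.2 ⟨ht1, htn⟩
  -- the three set integrals
  have hIoosub : Ioo (0 : ℝ) ε ⊆ Ioi 0 := fun a ha => ha.1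
  have hIcisub : Ici ε ⊆ Ioi (0 : ℝ) := fun a ha => lt_of_lt_of_le hε ha
  set cIoo : ℕ → ℝ := fun s => ∫ α in Ioo (0 : ℝ) ε, α ^ s / ascFactorial α n * π α
    with hcIoo_def
  set cIci : ℕ → ℝ := fun s => ∫ α in Ici ε, α ^ s / ascFactorial α n * π α
    with hcIci_def
  set N : ℝ := ∑ s ∈ Finset.Icc 1 n, cIoo s * W s with hN_def
  set T : ℝ := ∑ s ∈ Finset.Icc 1 n, cIci s * W s with hT_def
  have hsplit : ∀ s ∈ Finset.Icc 1 n, priorCoeff π n s = cIoo s + cIci s := by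
    intro s hs
    obtain ⟨hs1, hs2⟩ := Finset.mem_Icc.1 hs
    exact dpm_coeff_split hA1 hs1 hs2 hε
  have hcIci_nonneg : ∀ s ∈ Finset.Icc 1 n, 0 ≤ cIci s := fun s _ =>
    dpm_setIntegral_f_nonneg hA1 s n measurableSet_Ici hIcisub
  have hcIoo_nonneg : ∀ s ∈ Finset.Icc 1 n, 0 ≤ cIoo s := fun s _ =>
    dpm_setIntegral_f_nonneg hA1 s n measurableSet_Ioo hIoosub
  -- identify the numerator and denominator of postAlphaBelow
  have hNum : (∫ α in Ioo (0 : ℝ) ε,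
      π α * ∑ s ∈ Finset.Icc 1 n, α ^ s / ascFactorial α n * W s) = N :=
    dpm_setIntegral_weighted_sum hA1 W measurableSet_Ioo hIoosub
  have hDen : (∫ α in Ioi (0 : ℝ),
      π α * ∑ s ∈ Finset.Icc 1 n, α ^ s / ascFactorial α n * W s) = D := by
    rw [dpm_setIntegral_weighted_sum hA1 W measurableSet_Ioi subset_rfl, hD_def]
    exact Finset.sum_congr rfl fun r _ => rfl
  have hNT : N + T = D := by
    rw [hN_def, hT_def, ← Finset.sum_add_distrib, hD_def]
    apply Finset.sum_congr rfl
    intro s hs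
    rw [Pn, hsplit s hs]
    ring
  have hT_nonneg : 0 ≤ T :=
    Finset.sum_nonneg fun s hs => mul_nonneg (hcIci_nonneg s hs) (hW s)
  have hN_nonneg : 0 ≤ N :=
    Finset.sum_nonneg fun s hs => mul_nonneg (hcIoo_nonneg s hs) (hW s)
  -- bound the tail T
  have hPnt_le_D : Pn π k q0 n t x ≤ D := Finset.single_le_sum hPn_nonneg htmem
  have hT_le : T ≤ γ * Pn π k q0 n t x + (D - Pn π k q0 n t x) := by
    have hrest : ∑ s ∈ (Finset.Icc 1 n).erase t, cIci s * W s
        ≤ ∑ s ∈ (Finset.Icc 1 n).erase t, Pn π k q0 n s x := by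
      apply Finset.sum_le_sum
      intro s hs
      have hs' := Finset.mem_of_mem_erase hs
      rw [Pn]
      calc cIci s * W s ≤ priorCoeff π n s * W s := by
            apply mul_le_mul_of_nonneg_right _ (hW s)
            rw [hsplit s hs']
            linarith [hcIoo_nonneg s hs']
        _ = priorCoeff π n s * clusterWeight k q0 n s x := rfl
    have hhead : cIci t * W t ≤ γ * Pn π k q0 n t x := by
      rw [Pn, ← mul_assoc]
      exact mul_le_mul_of_nonneg_right htail (hW t)
    have hTsplit : T = cIci t * W t + ∑ s ∈ (Finset.Icc 1 n).erase t, cIci s * W s :=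
      (Finset.add_sum_erase _ _ htmem).symm
    have hDsplit : D = Pn π k q0 n t x + ∑ s ∈ (Finset.Icc 1 n).erase t, Pn π k q0 n s x :=
      (Finset.add_sum_erase _ _ htmem).symm
    rw [hTsplit]
    have := add_le_add hhead hrest
    linarith [hDsplit]
  -- now the final computation
  have hpost : postAlphaBelow π k q0 n x ε = N / D := by
    rw [postAlphaBelow, hNum, hDen]
  set q : ℝ := postK π k q0 n t x with hq_def
  have hq_eq : q = Pn π k q0 n t x / D := rfl
  have hq_le_one : q ≤ 1 := by
    rw [hq_eq]
    exact (div_le_one hDpos).2 hPnt_le_D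
  have hq_nonneg : 0 ≤ q := by
    rw [hq_eq]
    exact div_nonneg (hPn_nonneg t htmem) hD_nonneg
  have hp_le_one : N / D ≤ 1 := (div_le_one hDpos).2 (by linarith)
  have hp_nonneg : 0 ≤ N / D := div_nonneg hN_nonneg hD_nonneg
  rw [hpost, abs_of_nonpos (by linarith), abs_of_nonpos (by linarith)]
  -- goal: -(N/D - 1) ≤ γ + -(q - 1)
  have hkey : Pn π k q0 n t x - N ≤ γ * D := by
    have h1 : D - N ≤ γ * Pn π k q0 n t x + (D - Pn π k q0 n t x) := by
      rw [← hNT] at hT_le ⊢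
      linarith
    have h2 : γ * Pn π k q0 n t x ≤ γ * D := mul_le_mul_of_nonneg_left hPnt_le_D hγ.le
    linarith
  have hdivkey : (Pn π k q0 n t x - N) / D ≤ γ := (div_le_iff₀ hDpos).2 (by linarith)
  have hsubdiv : Pn π k q0 n t x / D - N / D = (Pn π k q0 n t x - N) / D :=
    (sub_div _ _ _).symm
  rw [hq_eq]
  linarith [hsubdiv, hdivkey]

end DPMAux3
/-- Proposition 2 of the paper.
If the data are i.i.d. from a finite mixture `Σ_{j=1}^t p_j R_j` with `t` distinct
components and the posterior of the number of clusters is consistent at `t`, then the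
posterior of the concentration parameter `α` converges weakly to `δ_0` in probability,
i.e. `pr(α < ε | X_{1:n}) → 1` in probability for every `ε > 0`. -/
theorem dpm_posterior_alpha_degenerates_at_zero
    (k : ℝ → ℝ → ℝ) (hkmeas : Measurable (Function.uncurry k))
    (hknn : ∀ x θ, 0 ≤ k x θ)
    (q0 : ℝ → ℝ) (hq0 : IsDensity q0)
    (π : ℝ → ℝ) (hA1 : IsPriorDensity π) (hA2 : ∃ ε δ β : ℝ, PolyAtZero π ε δ β)
    (t : ℕ) (ht : 1 ≤ t) (p : Fin t → ℝ) (hp : ∀ j, p j ∈ Set.Ioo (0:ℝ) 1)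
    (hpsum : ∑ j, p j = 1)
    (R : Fin t → Measure ℝ) (hR : ∀ j, IsProbabilityMeasure (R j))
    (hRdist : ∀ j l, j ≠ l → R j ≠ R l)
    (Ω : Type) [MeasurableSpace Ω] (μ : Measure Ω) [IsProbabilityMeasure μ]
    (X : ℕ → Ω → ℝ) (hXm : ∀ i, Measurable (X i))
    (hXindep : ProbabilityTheory.iIndepFun X μ)
    (hXlaw : ∀ i, Measure.map (X i) μ = ∑ j, ENNReal.ofReal (p j) • R j)
    (hcons : TendstoInMeasure μ
      (fun n ω => postK π k q0 n t (fun i : Fin n => X i ω)) atTop (fun _ => 1)) :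
    ∀ ε : ℝ, 0 < ε →
      TendstoInMeasure μ
        (fun n ω => postAlphaBelow π k q0 n (fun i : Fin n => X i ω) ε)
        atTop (fun _ => 1) := by
  intro ε hε
  rw [tendstoInMeasure_iff_dist] at hcons ⊢
  intro η hη
  set c : ℝ := min (η / 4) (1 / 4) with hc_def
  have hc : (0 : ℝ) < c := lt_min (by linarith) (by norm_num)
  have hcons' := hcons c hc
  obtain ⟨ε₀, δ, β, hA2'⟩ := hA2
  have htail := dpm_tail_eventually_le hA1 hA2' ht hε (γ := η / 2) (by linarith)
  apply tendsto_of_tendsto_of_tendsto_of_le_of_le' tendsto_const_nhds hcons'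
  · filter_upwards with n using zero_le
  · filter_upwards [htail, eventually_ge_atTop t] with n htailn htn
    apply measure_mono
    intro ω hω
    simp only [Set.mem_setOf_eq] at hω ⊢
    by_contra hlt
    push_neg at hlt
    have hq1 : |postK π k q0 n t (fun i : Fin n => X i ω) - 1| < c := by
      rwa [Real.dist_eq] at hlt
    have hq : 1 / 2 < postK π k q0 n t (fun i : Fin n => X i ω) := by
      have h1 : |postK π k q0 n t (fun i : Fin n => X i ω) - 1| < 1 / 4 :=
        lt_of_lt_of_le hq1 (min_le_right _ _)
      have h2 := (abs_lt.1 h1).1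
      linarith
    have hb := dpm_key_bound hA1 hknn hq0.2.1 ht htn hε
      (by linarith : (0 : ℝ) < η / 2) htailn (fun i : Fin n => X i ω) hq
    rw [Real.dist_eq] at hω
    have h3 : |postK π k q0 n t (fun i : Fin n => X i ω) - 1| < η / 4 :=
      lt_of_lt_of_le hq1 (min_le_left _ _)
    linarith
end
end

section
/- Suppose the prior density π on (0,∞) satisfies A1 and A2 with constants ε∈(0,1), δ>0, β>0, and fix an integer t ≥ 1. Then there exists G > 0 such that for every n ≥ 4 and every integer s with 0 < s ≤ n − t, C(n,t,t+s) ≤ G · Γ(t+β+1) · 2^s · s · ε^{−1} · E(α^{t+s−1}) · (log(n/(1+ε)))^{−1}, where C(n,t,t+s) = (∫_0^∞ α^{t+s}/α^{(n)} π(α) dα)/(∫_0^∞ α^{t}/α^{(n)} π(α) dα), E(α^r) = ∫_0^∞ α^r π(α) dα (possibly infinite), and Γ is the Gamma function. -/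
open MeasureTheory Filter Topology
open scoped Classical BigOperators ENNReal

noncomputable section

/-- The lower incomplete Gamma function `γ(x,y) = ∫_0^y z^{x−1} e^{−z} dz`. -/
def lowerGamma (x y : ℝ) : ℝ := ∫ z in (0:ℝ)..y, z ^ (x - 1) * Real.exp (-z)

/-- `C(n,t,s) = (∫_0^∞ α^s/α^{(n)} π dα)/(∫_0^∞ α^t/α^{(n)} π dα)`. -/
def Cratio (π : ℝ → ℝ) (n t s : ℕ) : ℝ :=
  (∫ α in Set.Ioi (0:ℝ), α ^ s / ascFactorial α n * π α) /
  (∫ α in Set.Ioi (0:ℝ), α ^ t / ascFactorial α n * π α)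

/-- sup bound : x^r e^{-mx} ≤ (r/m)^r -/
lemma rpow_mul_exp_neg_le {x r m : ℝ} (hx : 0 < x) (hr : 0 < r) (hm : 0 < m) :
    x ^ r * Real.exp (-(m * x)) ≤ (r / m) ^ r := by
  have h1 : x ^ r = Real.exp (r * Real.log x) := by
    rw [Real.rpow_def_of_pos hx, mul_comm]
  have h2 : (r / m) ^ r = Real.exp (r * Real.log (r / m)) := by
    rw [Real.rpow_def_of_pos (by positivity), mul_comm]
  rw [h1, h2, ← Real.exp_add, Real.exp_le_exp]
  have h3 : Real.log (x * (m / r)) ≤ x * (m / r) - 1 :=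
    Real.log_le_sub_one_of_pos (by positivity)
  have h4 : Real.log (x * (m / r)) = Real.log x - Real.log (r / m) := by
    rw [Real.log_mul hx.ne' (by positivity), Real.log_div hm.ne' hr.ne',
      Real.log_div hr.ne' hm.ne']
    ring
  rw [h4] at h3
  have h5 : r * (Real.log x - Real.log (r / m)) ≤ r * (x * (m / r) - 1) :=
    mul_le_mul_of_nonneg_left h3 hr.le
  have h6 : r * (x * (m / r) - 1) = m * x - r := by field_simp
  nlinarith [h5, h6]

/-- exp(x/(1+ε)) ≤ 1 + x for 0 ≤ x ≤ ε -/
lemma exp_div_one_add_le {x ε : ℝ} (hx : 0 ≤ x) (hxε : x ≤ ε) :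
    Real.exp (x / (1 + ε)) ≤ 1 + x := by
  have hε : 0 ≤ ε := hx.trans hxε
  have h1 : x / (1 + ε) ≤ x / (1 + x) := div_le_div_of_nonneg_left hx (by linarith) (by linarith)
  have h2 : Real.exp (x / (1 + x)) ≤ 1 + x := by
    have hy : (0:ℝ) < 1 + x := by linarith
    have h3 : 1 - x / (1 + x) ≤ Real.exp (-(x / (1 + x))) := by
      have := Real.add_one_le_exp (-(x / (1 + x))); linarith
    have h4 : 1 - x / (1 + x) = (1 + x)⁻¹ := by field_simp; ring
    rw [h4] at h3
    have h5 : Real.exp (x / (1 + x)) = (Real.exp (-(x / (1 + x))))⁻¹ := by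
      rw [← Real.exp_neg, neg_neg]
    rw [h5]
    exact (inv_le_comm₀ (Real.exp_pos _) hy).mpr h3
  exact (Real.exp_le_exp.mpr h1).trans h2

/-- partial harmonic sum -/
def hsum (m : ℕ) : ℝ := ∑ i ∈ Finset.range m, ((i : ℝ) + 1)⁻¹

lemma hsum_eq (m : ℕ) : hsum m = (harmonic m : ℝ) := by
  unfold hsum harmonic
  push_cast
  rfl

lemma log_le_hsum {n : ℕ} (hn : 1 ≤ n) : Real.log n ≤ hsum (n - 1) := by
  rw [hsum_eq]
  have := log_add_one_le_harmonic (n - 1)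
  have h : ((n - 1 : ℕ) : ℝ) + 1 = (n : ℝ) := by
    have : (n - 1) + 1 = n := Nat.succ_pred_eq_of_pos hn
    exact_mod_cast congrArg (Nat.cast (R := ℝ)) this
  rw [← h]
  exact_mod_cast this

lemma hsum_le {n : ℕ} (hn : 2 ≤ n) : hsum (n - 1) ≤ 1 + Real.log n := by
  rw [hsum_eq]
  refine (harmonic_le_one_add_log (n - 1)).trans ?_
  have h1 : (0:ℝ) < ((n - 1 : ℕ) : ℝ) := by
    have : 0 < n - 1 := by omega
    exact_mod_cast this
  have h2 : ((n - 1 : ℕ) : ℝ) ≤ (n : ℝ) := by exact_mod_cast Nat.sub_le n 1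
  have := Real.log_le_log h1 h2
  linarith

lemma hsum_nonneg (m : ℕ) : 0 ≤ hsum m := by
  unfold hsum
  positivity

/-- lower bound for the shifted product, α ∈ (0, ε] -/
lemma prod_shift_lower {α ε : ℝ} (m : ℕ) (hα : 0 < α) (hαε : α ≤ ε) :
    (m.factorial : ℝ) * Real.exp (α / (1 + ε) * hsum m) ≤
      ∏ i ∈ Finset.range m, (α + ((i : ℝ) + 1)) := by
  have hε : 0 < ε := hα.trans_le hαε
  have h1 : (m.factorial : ℝ) = ∏ i ∈ Finset.range m, ((i : ℝ) + 1) := by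
    induction m with
    | zero => simp
    | succ k ih => rw [Finset.prod_range_succ, ← ih, Nat.factorial_succ]; push_cast; ring
  rw [h1, hsum, Finset.mul_sum, Real.exp_sum, ← Finset.prod_mul_distrib]
  refine Finset.prod_le_prod (fun i _ => by positivity) (fun i _ => ?_)
  have hi : (0:ℝ) < (i : ℝ) + 1 := by positivity
  have hx : α / ((i : ℝ) + 1) ≤ ε := by
    rw [div_le_iff₀ hi]
    nlinarith
  have key := exp_div_one_add_le (x := α / ((i : ℝ) + 1)) (by positivity) hx
  have : ((i : ℝ) + 1) * Real.exp (α / (1 + ε) * ((i : ℝ) + 1)⁻¹) ≤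
      ((i : ℝ) + 1) * (1 + α / ((i : ℝ) + 1)) := by
    refine mul_le_mul_of_nonneg_left ?_ hi.le
    refine le_trans (Real.exp_le_exp.mpr (le_of_eq (by ring))) key
  calc ((i : ℝ) + 1) * Real.exp (α / (1 + ε) * ((i : ℝ) + 1)⁻¹)
      ≤ ((i : ℝ) + 1) * (1 + α / ((i : ℝ) + 1)) := this
    _ = α + ((i : ℝ) + 1) := by field_simp; ring

/-- upper bound for the shifted product -/
lemma prod_shift_upper {α : ℝ} (m : ℕ) (hα : 0 ≤ α) :
    ∏ i ∈ Finset.range m, (α + ((i : ℝ) + 1)) ≤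
      (m.factorial : ℝ) * Real.exp (α * hsum m) := by
  have h1 : (m.factorial : ℝ) = ∏ i ∈ Finset.range m, ((i : ℝ) + 1) := by
    induction m with
    | zero => simp
    | succ k ih => rw [Finset.prod_range_succ, ← ih, Nat.factorial_succ]; push_cast; ring
  rw [h1, hsum, Finset.mul_sum, Real.exp_sum, ← Finset.prod_mul_distrib]
  refine Finset.prod_le_prod (fun i _ => by positivity) (fun i _ => ?_)
  have hi : (0:ℝ) < (i : ℝ) + 1 := by positivity
  have key : 1 + α / ((i : ℝ) + 1) ≤ Real.exp (α / ((i : ℝ) + 1)) := by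
    have := Real.add_one_le_exp (α / ((i : ℝ) + 1)); linarith
  calc α + ((i : ℝ) + 1) = ((i : ℝ) + 1) * (1 + α / ((i : ℝ) + 1)) := by field_simp; ring
    _ ≤ ((i : ℝ) + 1) * Real.exp (α / ((i : ℝ) + 1)) :=
        mul_le_mul_of_nonneg_left key hi.le
    _ = ((i : ℝ) + 1) * Real.exp (α * ((i : ℝ) + 1)⁻¹) := by rw [div_eq_mul_inv]

lemma prod_shift_mono {α α' : ℝ} (m : ℕ) (hα : 0 ≤ α) (h : α ≤ α') :
    ∏ i ∈ Finset.range m, (α + ((i : ℝ) + 1)) ≤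
      ∏ i ∈ Finset.range m, (α' + ((i : ℝ) + 1)) := by
  refine Finset.prod_le_prod (fun i _ => by positivity) (fun i _ => by linarith)

lemma prod_shift_pos {α : ℝ} (m : ℕ) (hα : 0 ≤ α) :
    0 < ∏ i ∈ Finset.range m, (α + ((i : ℝ) + 1)) :=
  Finset.prod_pos (fun i _ => by positivity)

lemma ascFactorial_eq {α : ℝ} {n : ℕ} (hn : 1 ≤ n) :
    ascFactorial α n = α * ∏ i ∈ Finset.range (n - 1), (α + ((i : ℝ) + 1)) := by
  obtain ⟨m, rfl⟩ : ∃ m, n = m + 1 := ⟨n - 1, by omega⟩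
  unfold ascFactorial
  rw [Finset.prod_range_succ' (fun i => α + (i : ℝ)) m]
  simp only [Nat.add_sub_cancel, Nat.cast_add, Nat.cast_one, Nat.cast_zero, add_zero]
  rw [mul_comm]

lemma pow_le_ascFactorial {α : ℝ} {k n : ℕ} (hα : 0 < α) (hk : 1 ≤ k) (hkn : k ≤ n) :
    α ^ k ≤ ascFactorial α n := by
  obtain ⟨m, rfl⟩ : ∃ m, n = k + m := ⟨n - k, by omega⟩
  unfold ascFactorial
  rw [Finset.prod_range_add]
  have h1 : α ^ k ≤ ∏ i ∈ Finset.range k, (α + (i : ℝ)) := by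
    have he : α ^ k = ∏ _i ∈ Finset.range k, α := by
      rw [Finset.prod_const, Finset.card_range]
    rw [he]
    refine Finset.prod_le_prod (fun i _ => hα.le) (fun i _ => by
      have : (0:ℝ) ≤ (i : ℝ) := Nat.cast_nonneg i
      linarith)
  have h2 : (1:ℝ) ≤ ∏ i ∈ Finset.range m, (α + ((k + i : ℕ) : ℝ)) := by
    have he : (1:ℝ) = ∏ _i ∈ Finset.range m, (1:ℝ) := by simp
    rw [he]
    refine Finset.prod_le_prod (fun i _ => zero_le_one) (fun i _ => ?_)
    have : (1:ℝ) ≤ ((k + i : ℕ) : ℝ) := by exact_mod_cast by omega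
    linarith
  calc α ^ k = α ^ k * 1 := by ring
    _ ≤ (∏ i ∈ Finset.range k, (α + (i : ℝ))) *
        ∏ i ∈ Finset.range m, (α + ((k + i : ℕ) : ℝ)) := by
        refine mul_le_mul h1 h2 zero_le_one ?_
        exact Finset.prod_nonneg fun i _ => by
          have : (0:ℝ) ≤ (i : ℝ) := Nat.cast_nonneg i
          linarith

lemma ascFactorial_pos {α : ℝ} (n : ℕ) (hα : 0 < α) : 0 < ascFactorial α n :=
  Finset.prod_pos (fun i _ => by have : (0:ℝ) ≤ (i:ℝ) := Nat.cast_nonneg i; linarith)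

lemma measurable_ascFactorial {n : ℕ} : Measurable (fun α : ℝ => ascFactorial α n) := by
  unfold ascFactorial
  exact Finset.measurable_prod _ (fun i _ => measurable_id.add_const _)

lemma integral_Ioo_rpow {r c : ℝ} (hr : -1 < r) (hc : 0 ≤ c) :
    ∫ x in Set.Ioo (0:ℝ) c, x ^ r = c ^ (r + 1) / (r + 1) := by
  rw [← MeasureTheory.integral_Ioc_eq_integral_Ioo, ← intervalIntegral.integral_of_le hc,
    integral_rpow (Or.inl hr)]
  rw [Real.zero_rpow (by linarith : r + 1 ≠ 0)]
  ring

lemma integrableOn_Ioo_rpow {r c : ℝ} (hr : -1 < r) (hc : 0 ≤ c) :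
    IntegrableOn (fun x : ℝ => x ^ r) (Set.Ioo (0:ℝ) c) := by
  have h := intervalIntegral.intervalIntegrable_rpow' (a := 0) (b := c) hr
  rw [intervalIntegrable_iff_integrableOn_Ioc_of_le hc] at h
  exact h.mono_set Set.Ioo_subset_Ioc_self

lemma integral_Ioo_exp_neg_le {m c : ℝ} (hm : 0 < m) (hc : 0 ≤ c) :
    ∫ x in Set.Ioo (0:ℝ) c, Real.exp (-(m * x)) ≤ 1 / m := by
  rw [← MeasureTheory.integral_Ioc_eq_integral_Ioo, ← intervalIntegral.integral_of_le hc]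
  have h1 : ∫ x in (0:ℝ)..c, Real.exp (-(m * x)) =
      m⁻¹ • ∫ x in (m * 0)..(m * c), Real.exp (-x) := by
    rw [← intervalIntegral.integral_comp_mul_left (fun x => Real.exp (-x)) hm.ne']
  rw [h1]
  have h2 : ∫ x in (m * 0)..(m * c), Real.exp (-x) ≤ 1 := by
    have h3 : ∫ x in (m * 0)..(m * c), Real.exp (-x) =
        ∫ x in (-(m * c))..(-(m * 0)), Real.exp x := by
      rw [← intervalIntegral.integral_comp_neg (fun x => Real.exp x)]
    rw [h3, integral_exp]
    simp only [mul_zero, neg_zero, Real.exp_zero]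
    have := Real.exp_pos (-(m * c))
    linarith
  rw [smul_eq_mul, one_div]
  have : (0:ℝ) ≤ m⁻¹ := by positivity
  nlinarith

lemma integrableOn_Ioo_exp_neg {m c : ℝ} (hc : 0 ≤ c) :
    IntegrableOn (fun x : ℝ => Real.exp (-(m * x))) (Set.Ioo (0:ℝ) c) := by
  have h : IntervalIntegrable (fun x : ℝ => Real.exp (-(m * x))) volume 0 c :=
    (Continuous.intervalIntegrable (by continuity) 0 c)
  rw [intervalIntegrable_iff_integrableOn_Ioc_of_le hc] at h
  exact h.mono_set Set.Ioo_subset_Ioc_self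


section Main

variable {π : ℝ → ℝ} {ε δ β : ℝ}

lemma pi_integrableOn (hA1 : IsPriorDensity π) : IntegrableOn π (Set.Ioi (0:ℝ)) := by
  by_contra h
  have := MeasureTheory.integral_undef h
  rw [hA1.2.2] at this
  norm_num at this

lemma fk_integrableOn (hA1 : IsPriorDensity π) {k n : ℕ} (hk : 1 ≤ k) (hkn : k ≤ n) :
    IntegrableOn (fun α => α ^ k / ascFactorial α n * π α) (Set.Ioi (0:ℝ)) := by
  refine Integrable.mono (pi_integrableOn hA1) ?_ ?_
  · exact (((measurable_id.pow_const k).div measurable_ascFactorial).mul hA1.1).aestronglyMeasurable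
  · refine (MeasureTheory.ae_restrict_mem measurableSet_Ioi).mono (fun α hα => ?_)
    have hα' : (0:ℝ) < α := hα
    have h1 : 0 < ascFactorial α n := ascFactorial_pos n hα'
    have h2 : α ^ k / ascFactorial α n ≤ 1 := by
      rw [div_le_one h1]
      exact pow_le_ascFactorial hα' hk hkn
    have h3 : 0 ≤ α ^ k / ascFactorial α n := by positivity
    rw [Real.norm_eq_abs, Real.norm_eq_abs, abs_of_nonneg (mul_nonneg h3 (hA1.2.1 α)),
      abs_of_nonneg (hA1.2.1 α)]
    nlinarith [hA1.2.1 α]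


lemma denom_lower (hA1 : IsPriorDensity π) (hA2 : PolyAtZero π ε δ β) {n t : ℕ}
    (hn : 4 ≤ n) (ht : 1 ≤ t) (htn : t ≤ n) :
    δ⁻¹ * Real.exp (-1) / ((n - 1).factorial : ℝ) *
        ((ε / (1 + Real.log n)) ^ ((t:ℝ) + β) / ((t:ℝ) + β))
      ≤ ∫ α in Set.Ioi (0:ℝ), α ^ t / ascFactorial α n * π α := by
  obtain ⟨⟨hε0, hε1⟩, hδ, hβ, hπb⟩ := hA2
  have hn1 : (1:ℝ) < n := by exact_mod_cast by omega
  have hLn : 0 < Real.log n := Real.log_pos hn1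
  set M : ℝ := 1 + Real.log n with hM
  have hM1 : 1 ≤ M := by simp [hM]; linarith
  have hM0 : 0 < M := by linarith
  set c : ℝ := ε / M with hc
  have hc0 : 0 < c := by positivity
  have hcε : c ≤ ε := by
    rw [hc, div_le_iff₀ hM0]; nlinarith
  set p : ℝ := (t:ℝ) + β with hp
  have hp1 : 1 ≤ p := by
    have : (1:ℝ) ≤ (t:ℝ) := by exact_mod_cast ht
    simp [hp]; linarith
  have hp0 : 0 < p := by linarith
  set F : ℝ := ((n - 1).factorial : ℝ) with hF
  have hF0 : 0 < F := by positivity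
  set K : ℝ := δ⁻¹ * Real.exp (-1) / F with hK
  have hK0 : 0 < K := by positivity
  -- pointwise bound
  have hpoint : ∀ α ∈ Set.Ioo (0:ℝ) c, K * α ^ (p - 1) ≤ α ^ t / ascFactorial α n * π α := by
    intro α hα
    obtain ⟨hα0, hαc⟩ := hα
    have hαε : α < ε := lt_of_lt_of_le hαc hcε
    have hP := prod_shift_upper (n - 1) hα0.le
    have hSle := hsum_le (n := n) (by omega)
    have hP2 : ∏ i ∈ Finset.range (n - 1), (α + ((i : ℝ) + 1)) ≤ F * Real.exp (α * M) := by
      refine hP.trans ?_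
      rw [hF, hM]
      have : α * hsum (n - 1) ≤ α * (1 + Real.log n) :=
        mul_le_mul_of_nonneg_left hSle hα0.le
      exact mul_le_mul_of_nonneg_left (Real.exp_le_exp.mpr this) (by positivity)
    have hPpos : 0 < ∏ i ∈ Finset.range (n - 1), (α + ((i : ℝ) + 1)) :=
      prod_shift_pos _ hα0.le
    have hasc : ascFactorial α n = α * ∏ i ∈ Finset.range (n - 1), (α + ((i : ℝ) + 1)) :=
      ascFactorial_eq (by omega)
    obtain ⟨u, htu⟩ : ∃ u, t = u + 1 := ⟨t - 1, by omega⟩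
    have hdiv : α ^ t / ascFactorial α n = α ^ u / ∏ i ∈ Finset.range (n - 1), (α + ((i : ℝ) + 1)) := by
      rw [hasc, htu, pow_succ']
      rw [mul_div_mul_left _ _ (ne_of_gt hα0)]
    have hlow : α ^ u * (Real.exp (-1) / F) ≤ α ^ u / ∏ i ∈ Finset.range (n - 1), (α + ((i : ℝ) + 1)) := by
      have h1 : α ^ u / (F * Real.exp (α * M)) ≤
          α ^ u / ∏ i ∈ Finset.range (n - 1), (α + ((i : ℝ) + 1)) := by
        apply div_le_div_of_nonneg_left (by positivity) hPpos hP2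
      refine le_trans ?_ h1
      have hαM : α * M ≤ 1 := by
        have : α * M < c * M := by nlinarith
        have hcM : c * M = ε := by rw [hc]; field_simp
        nlinarith
      have hexp : Real.exp (-1) ≤ Real.exp (-(α * M)) := by
        rw [Real.exp_le_exp]; linarith
      rw [div_eq_mul_inv (α ^ u)]
      refine mul_le_mul_of_nonneg_left ?_ (by positivity)
      rw [mul_inv]
      calc Real.exp (-1) / F = F⁻¹ * Real.exp (-1) := by ring
        _ ≤ F⁻¹ * Real.exp (-(α*M)) := mul_le_mul_of_nonneg_left hexp (by positivity)
        _ = F⁻¹ * (Real.exp (α*M))⁻¹ := by rw [Real.exp_neg]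
    have hπlow : δ⁻¹ * α ^ β ≤ π α := (hπb α ⟨hα0, hαε⟩).1
    have hπnn : (0:ℝ) ≤ π α := hA1.2.1 α
    have hcombine : K * α ^ (p - 1) = (α ^ u * (Real.exp (-1) / F)) * (δ⁻¹ * α ^ β) := by
      have h1 : α ^ (p - 1) = α ^ u * α ^ β := by
        have h2 : (α:ℝ) ^ u = α ^ ((u:ℕ):ℝ) := (Real.rpow_natCast α u).symm
        rw [h2, ← Real.rpow_add hα0]
        congr 1
        rw [hp, htu]
        push_cast
        ring
      rw [h1, hK]
      ring
    rw [hdiv, hcombine]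
    have hfrac : 0 ≤ α ^ u / ∏ i ∈ Finset.range (n - 1), (α + ((i : ℝ) + 1)) := by positivity
    calc (α ^ u * (Real.exp (-1) / F)) * (δ⁻¹ * α ^ β)
        ≤ (α ^ u / ∏ i ∈ Finset.range (n - 1), (α + ((i : ℝ) + 1))) * (δ⁻¹ * α ^ β) := by
          exact mul_le_mul_of_nonneg_right hlow (by positivity)
      _ ≤ (α ^ u / ∏ i ∈ Finset.range (n - 1), (α + ((i : ℝ) + 1))) * π α := by
          exact mul_le_mul_of_nonneg_left hπlow hfrac
  -- integral comparison
  have hint : IntegrableOn (fun α => α ^ t / ascFactorial α n * π α) (Set.Ioi (0:ℝ)) :=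
    fk_integrableOn hA1 ht htn
  have hKint : IntegrableOn (fun α : ℝ => K * α ^ (p - 1)) (Set.Ioo (0:ℝ) c) :=
    (integrableOn_Ioo_rpow (by linarith) hc0.le).const_mul K
  have hstep1 : ∫ α in Set.Ioo (0:ℝ) c, K * α ^ (p - 1) ≤
      ∫ α in Set.Ioo (0:ℝ) c, α ^ t / ascFactorial α n * π α := by
    refine MeasureTheory.setIntegral_mono_on hKint
      (hint.mono_set (fun x hx => hx.1)) measurableSet_Ioo hpoint
  have hstep2 : ∫ α in Set.Ioo (0:ℝ) c, α ^ t / ascFactorial α n * π α ≤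
      ∫ α in Set.Ioi (0:ℝ), α ^ t / ascFactorial α n * π α := by
    refine MeasureTheory.setIntegral_mono_set hint ?_ ?_
    · refine (MeasureTheory.ae_restrict_mem measurableSet_Ioi).mono (fun α hα => ?_)
      have hα' : (0:ℝ) < α := hα
      have := ascFactorial_pos (α := α) n hα'
      have := hA1.2.1 α
      positivity
    · exact HasSubset.Subset.eventuallyLE (fun x hx => hx.1)
  have hval : ∫ α in Set.Ioo (0:ℝ) c, K * α ^ (p - 1) = K * (c ^ p / p) := by
    simp_rw [← smul_eq_mul (a := K)]
    rw [MeasureTheory.integral_smul, integral_Ioo_rpow (by linarith) hc0.le]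
    have hpp : p - 1 + 1 = p := by ring
    rw [hpp, smul_eq_mul]
  exact le_trans (le_of_eq hval.symm) (hstep1.trans hstep2)

lemma moment_lower (hA1 : IsPriorDensity π) (hA2 : PolyAtZero π ε δ β) (k : ℕ) :
    ENNReal.ofReal (δ⁻¹ * (ε ^ ((k:ℝ) + 1 + β) / ((k:ℝ) + 1 + β)))
      ≤ ∫⁻ α in Set.Ioi (0:ℝ), ENNReal.ofReal (α ^ k * π α) := by
  obtain ⟨⟨hε0, hε1⟩, hδ, hβ, hπb⟩ := hA2
  set q : ℝ := (k:ℝ) + 1 + β with hq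
  have hq0 : 0 < q := by positivity
  have step1 : ∫⁻ α in Set.Ioo (0:ℝ) ε, ENNReal.ofReal (δ⁻¹ * α ^ (q - 1))
      ≤ ∫⁻ α in Set.Ioi (0:ℝ), ENNReal.ofReal (α ^ k * π α) := by
    refine le_trans ?_ (MeasureTheory.lintegral_mono_set (s := Set.Ioo (0:ℝ) ε) (t := Set.Ioi 0) (fun x hx => hx.1))
    refine MeasureTheory.setLIntegral_mono' measurableSet_Ioo (fun α hα => ?_)
    obtain ⟨hα0, hαε⟩ := hα
    refine ENNReal.ofReal_le_ofReal ?_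
    have h1 : α ^ (q - 1) = α ^ k * α ^ β := by
      rw [show q - 1 = (k:ℝ) + β by rw [hq]; ring, Real.rpow_add hα0, Real.rpow_natCast]
    rw [h1, ← mul_assoc, mul_comm δ⁻¹ (α ^ k), mul_assoc]
    exact mul_le_mul_of_nonneg_left (hπb α ⟨hα0, hαε⟩).1 (by positivity)
  refine le_trans (le_of_eq ?_) step1
  have hint : IntegrableOn (fun α : ℝ => δ⁻¹ * α ^ (q - 1)) (Set.Ioo (0:ℝ) ε) :=
    (integrableOn_Ioo_rpow (by linarith) hε0.le).const_mul _
  rw [← MeasureTheory.ofReal_integral_eq_lintegral_ofReal hint]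
  · congr 1
    simp_rw [← smul_eq_mul (a := δ⁻¹)]
    rw [MeasureTheory.integral_smul, integral_Ioo_rpow (by linarith) hε0.le]
    have hqq : q - 1 + 1 = q := by ring
    rw [hqq, smul_eq_mul]
  · refine (MeasureTheory.ae_restrict_mem measurableSet_Ioo).mono (fun α hα => ?_)
    have : (0:ℝ) < α := hα.1
    positivity

lemma numer_upper (hA1 : IsPriorDensity π) (hA2 : PolyAtZero π ε δ β) {n t s : ℕ}
    (hn : 4 ≤ n) (ht : 1 ≤ t) (hs : 1 ≤ s) (htsn : t + s ≤ n) :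
    ∫⁻ α in Set.Ioi (0:ℝ), ENNReal.ofReal (α ^ (t + s) / ascFactorial α n * π α)
      ≤ ENNReal.ofReal (Real.exp (-(ε / (1 + ε) * Real.log n)) / ((n - 1).factorial : ℝ)) *
          (∫⁻ α in Set.Ioi (0:ℝ), ENNReal.ofReal (α ^ (t + s - 1) * π α)) +
        ENNReal.ofReal (δ * ε ^ (s - 1) / ((n - 1).factorial : ℝ) *
          ((2 * ((t:ℝ) + β) / (Real.log n / (1 + ε))) ^ ((t:ℝ) + β) *
            (2 * (1 + ε) / Real.log n))) := by
  obtain ⟨⟨hε0, hε1⟩, hδ, hβ, hπb⟩ := hA2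
  have hn1 : (1:ℝ) < n := by exact_mod_cast by omega
  have hLn : 0 < Real.log n := Real.log_pos hn1
  set Ln : ℝ := Real.log n with hLndef
  set F : ℝ := ((n - 1).factorial : ℝ) with hF
  have hF0 : 0 < F := by positivity
  set p : ℝ := (t:ℝ) + β with hp
  have hp0 : 0 < p := by positivity
  set lam : ℝ := Ln / (1 + ε) with hlam
  have hlam0 : 0 < lam := by positivity
  set v : ℕ := t + s - 1 with hv
  have hvs : t + s = v + 1 := by omega
  have hsplit : Set.Ioi (0:ℝ) = Set.Ioo 0 ε ∪ Set.Ici ε := (Set.Ioo_union_Ici_eq_Ioi hε0).symm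
  set KA : ℝ := Real.exp (-(ε / (1 + ε) * Ln)) / F with hKA
  have hKA0 : 0 ≤ KA := by positivity
  set CB : ℝ := δ * ε ^ (s - 1) / F * (2 * p / lam) ^ p with hCB
  have hCB0 : 0 ≤ CB := by positivity
  have hdiv : ∀ α : ℝ, 0 < α →
      α ^ (t + s) / ascFactorial α n =
        α ^ v / ∏ i ∈ Finset.range (n - 1), (α + ((i : ℝ) + 1)) := by
    intro α hα0
    rw [ascFactorial_eq (by omega), hvs, pow_succ']
    rw [mul_div_mul_left _ _ (ne_of_gt hα0)]
  -- part over Ici ε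
  have hPartA : ∫⁻ α in Set.Ici ε, ENNReal.ofReal (α ^ (t + s) / ascFactorial α n * π α)
      ≤ ENNReal.ofReal KA * ∫⁻ α in Set.Ioi (0:ℝ), ENNReal.ofReal (α ^ v * π α) := by
    have hpoint : ∀ α ∈ Set.Ici ε,
        ENNReal.ofReal (α ^ (t + s) / ascFactorial α n * π α)
          ≤ ENNReal.ofReal KA * ENNReal.ofReal (α ^ v * π α) := by
      intro α hα
      have hα0 : (0:ℝ) < α := lt_of_lt_of_le hε0 hα
      rw [← ENNReal.ofReal_mul hKA0]
      refine ENNReal.ofReal_le_ofReal ?_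
      rw [hdiv α hα0]
      have hPge : F * Real.exp (ε / (1 + ε) * Ln) ≤
          ∏ i ∈ Finset.range (n - 1), (α + ((i : ℝ) + 1)) := by
        refine le_trans ?_ (prod_shift_mono (n - 1) hε0.le hα)
        refine le_trans ?_ (prod_shift_lower (n - 1) hε0 le_rfl)
        rw [hF]
        refine mul_le_mul_of_nonneg_left (Real.exp_le_exp.mpr ?_) (by positivity)
        exact mul_le_mul_of_nonneg_left (log_le_hsum (by omega)) (by positivity)
      have hPpos : 0 < ∏ i ∈ Finset.range (n - 1), (α + ((i : ℝ) + 1)) :=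
        prod_shift_pos _ hα0.le
      have h2 : α ^ v / ∏ i ∈ Finset.range (n - 1), (α + ((i : ℝ) + 1)) ≤ α ^ v * KA := by
        have h3 : α ^ v / ∏ i ∈ Finset.range (n - 1), (α + ((i : ℝ) + 1)) ≤
            α ^ v / (F * Real.exp (ε / (1 + ε) * Ln)) :=
          div_le_div_of_nonneg_left (by positivity) (by positivity) hPge
        refine h3.trans (le_of_eq ?_)
        rw [hKA, Real.exp_neg]
        field_simp
      calc α ^ v / (∏ i ∈ Finset.range (n - 1), (α + ((i : ℝ) + 1))) * π α
          ≤ (α ^ v * KA) * π α := mul_le_mul_of_nonneg_right h2 (hA1.2.1 α)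
        _ = KA * (α ^ v * π α) := by ring
    calc ∫⁻ α in Set.Ici ε, ENNReal.ofReal (α ^ (t + s) / ascFactorial α n * π α)
        ≤ ∫⁻ α in Set.Ici ε, ENNReal.ofReal KA * ENNReal.ofReal (α ^ v * π α) :=
          MeasureTheory.setLIntegral_mono' measurableSet_Ici hpoint
      _ = ENNReal.ofReal KA * ∫⁻ α in Set.Ici ε, ENNReal.ofReal (α ^ v * π α) :=
          MeasureTheory.lintegral_const_mul' _ _ ENNReal.ofReal_ne_top
      _ ≤ ENNReal.ofReal KA * ∫⁻ α in Set.Ioi (0:ℝ), ENNReal.ofReal (α ^ v * π α) := by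
          exact mul_le_mul_right (MeasureTheory.lintegral_mono_set
            (fun x hx => lt_of_lt_of_le hε0 hx)) _
  -- part over Ioo 0 ε
  have hPartB : ∫⁻ α in Set.Ioo (0:ℝ) ε, ENNReal.ofReal (α ^ (t + s) / ascFactorial α n * π α)
      ≤ ENNReal.ofReal (δ * ε ^ (s - 1) / F *
          ((2 * p / lam) ^ p * (2 * (1 + ε) / Ln))) := by
    have hpoint : ∀ α ∈ Set.Ioo (0:ℝ) ε,
        ENNReal.ofReal (α ^ (t + s) / ascFactorial α n * π α)
          ≤ ENNReal.ofReal (CB * Real.exp (-(lam / 2 * α))) := by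
      intro α hα
      obtain ⟨hα0, hαε⟩ := hα
      refine ENNReal.ofReal_le_ofReal ?_
      rw [hdiv α hα0]
      have hPge : F * Real.exp (lam * α) ≤
          ∏ i ∈ Finset.range (n - 1), (α + ((i : ℝ) + 1)) := by
        refine le_trans ?_ (prod_shift_lower (n - 1) hα0 hαε.le)
        rw [hF]
        refine mul_le_mul_of_nonneg_left (Real.exp_le_exp.mpr ?_) (by positivity)
        rw [hlam]
        calc Ln / (1 + ε) * α = α / (1 + ε) * Ln := by ring
          _ ≤ α / (1 + ε) * hsum (n - 1) :=
            mul_le_mul_of_nonneg_left (log_le_hsum (by omega)) (by positivity)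
      have hPpos : 0 < ∏ i ∈ Finset.range (n - 1), (α + ((i : ℝ) + 1)) :=
        prod_shift_pos _ hα0.le
      have h1 : (α ^ v / ∏ i ∈ Finset.range (n - 1), (α + ((i : ℝ) + 1))) * π α ≤
          α ^ v * Real.exp (-(lam * α)) / F * (δ * α ^ β) := by
        have h2 : α ^ v / ∏ i ∈ Finset.range (n - 1), (α + ((i : ℝ) + 1)) ≤
            α ^ v * Real.exp (-(lam * α)) / F := by
          refine le_trans (div_le_div_of_nonneg_left (by positivity) (by positivity) hPge)
            (le_of_eq ?_)
          rw [Real.exp_neg]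
          field_simp
        have hπup : π α ≤ δ * α ^ β := (hπb α ⟨hα0, hαε⟩).2
        have hfr : (0:ℝ) ≤ α ^ v / ∏ i ∈ Finset.range (n - 1), (α + ((i : ℝ) + 1)) := by
          positivity
        calc α ^ v / (∏ i ∈ Finset.range (n - 1), (α + ((i : ℝ) + 1))) * π α
            ≤ α ^ v / (∏ i ∈ Finset.range (n - 1), (α + ((i : ℝ) + 1))) * (δ * α ^ β) :=
              mul_le_mul_of_nonneg_left hπup hfr
          _ ≤ α ^ v * Real.exp (-(lam * α)) / F * (δ * α ^ β) :=
              mul_le_mul_of_nonneg_right h2 (by positivity)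
      refine h1.trans ?_
      -- α^v ≤ α^t * ε^(s-1), and α^t * α^β = α^p
      have h3 : α ^ v = α ^ t * α ^ (s - 1) := by rw [hv, ← pow_add]; congr 1; omega
      have h4 : α ^ (s - 1) ≤ ε ^ (s - 1) := pow_le_pow_left₀ hα0.le hαε.le _
      have h5 : (α:ℝ) ^ t * α ^ β = α ^ p := by
        rw [hp, Real.rpow_add hα0, Real.rpow_natCast]
      have h6 : α ^ p * Real.exp (-(lam * α)) ≤ (2 * p / lam) ^ p * Real.exp (-(lam / 2 * α)) := by
        have h7 : α ^ p * Real.exp (-(lam * α)) =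
            (α ^ p * Real.exp (-(lam / 2 * α))) * Real.exp (-(lam / 2 * α)) := by
          rw [mul_assoc, ← Real.exp_add]; congr 2; ring
        rw [h7]
        refine mul_le_mul_of_nonneg_right ?_ (Real.exp_pos _).le
        have := rpow_mul_exp_neg_le (x := α) (r := p) (m := lam / 2) hα0 hp0 (by positivity)
        refine this.trans (le_of_eq ?_)
        congr 1
        field_simp
      calc α ^ v * Real.exp (-(lam * α)) / F * (δ * α ^ β)
          = (α ^ t * α ^ β) * Real.exp (-(lam * α)) * (δ * α ^ (s-1) / F) := by rw [h3]; ring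
        _ ≤ (α ^ t * α ^ β) * Real.exp (-(lam * α)) * (δ * ε ^ (s-1) / F) := by
            refine mul_le_mul_of_nonneg_left ?_ (by positivity)
            gcongr
        _ = (α ^ p * Real.exp (-(lam * α))) * (δ * ε ^ (s-1) / F) := by rw [h5]
        _ ≤ ((2 * p / lam) ^ p * Real.exp (-(lam / 2 * α))) * (δ * ε ^ (s-1) / F) :=
            mul_le_mul_of_nonneg_right h6 (by positivity)
        _ = CB * Real.exp (-(lam / 2 * α)) := by rw [hCB]; ring
    calc ∫⁻ α in Set.Ioo (0:ℝ) ε, ENNReal.ofReal (α ^ (t + s) / ascFactorial α n * π α)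
        ≤ ∫⁻ α in Set.Ioo (0:ℝ) ε, ENNReal.ofReal (CB * Real.exp (-(lam / 2 * α))) :=
          MeasureTheory.setLIntegral_mono' measurableSet_Ioo hpoint
      _ = ENNReal.ofReal (∫ α in Set.Ioo (0:ℝ) ε, CB * Real.exp (-(lam / 2 * α))) := by
          rw [MeasureTheory.ofReal_integral_eq_lintegral_ofReal
            ((integrableOn_Ioo_exp_neg hε0.le).const_mul CB)
            (Filter.Eventually.of_forall (fun α => by positivity))]
      _ ≤ ENNReal.ofReal (δ * ε ^ (s - 1) / F * ((2 * p / lam) ^ p * (2 * (1 + ε) / Ln))) := by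
          refine ENNReal.ofReal_le_ofReal ?_
          simp_rw [← smul_eq_mul (a := CB)]
          rw [MeasureTheory.integral_smul, smul_eq_mul]
          have h8 := integral_Ioo_exp_neg_le (m := lam / 2) (c := ε) (by positivity) hε0.le
          have h9 : (1:ℝ) / (lam / 2) = 2 * (1 + ε) / Ln := by
            rw [hlam]; field_simp
          calc CB * ∫ α in Set.Ioo (0:ℝ) ε, Real.exp (-(lam / 2 * α))
              ≤ CB * (1 / (lam / 2)) := mul_le_mul_of_nonneg_left h8 hCB0
            _ = δ * ε ^ (s - 1) / F * ((2 * p / lam) ^ p * (2 * (1 + ε) / Ln)) := by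
                rw [h9, hCB]; ring
  calc ∫⁻ α in Set.Ioi (0:ℝ), ENNReal.ofReal (α ^ (t + s) / ascFactorial α n * π α)
      ≤ (∫⁻ α in Set.Ioo (0:ℝ) ε, ENNReal.ofReal (α ^ (t + s) / ascFactorial α n * π α)) +
        ∫⁻ α in Set.Ici ε, ENNReal.ofReal (α ^ (t + s) / ascFactorial α n * π α) := by
        rw [hsplit]
        exact MeasureTheory.lintegral_union_le _ _ _
    _ ≤ ENNReal.ofReal (δ * ε ^ (s - 1) / F * ((2 * p / lam) ^ p * (2 * (1 + ε) / Ln))) +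
        ENNReal.ofReal KA * ∫⁻ α in Set.Ioi (0:ℝ), ENNReal.ofReal (α ^ v * π α) :=
        add_le_add hPartB hPartA
    _ = ENNReal.ofReal KA * (∫⁻ α in Set.Ioi (0:ℝ), ENNReal.ofReal (α ^ (t + s - 1) * π α)) +
        ENNReal.ofReal (δ * ε ^ (s - 1) / F *
          ((2 * p / lam) ^ p * (2 * (1 + ε) / Ln))) := by
        rw [add_comm]

set_option maxHeartbeats 1000000 in
lemma RA_ineq (hε0 : 0 < ε) (hε1 : ε < 1) (hδ : 0 < δ) (hβ : 0 < β) {t n s : ℕ}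
    (ht : 1 ≤ t) (hn : 4 ≤ n) (hs : 1 ≤ s) {G : ℝ}
    (hG : 2 * δ * Real.exp 1 * ((t:ℝ) + β) * ε ^ (1 - ((t:ℝ) + β)) *
        (2 * (((t:ℝ) + β) + 1) / (ε / (1 + ε))) ^ (((t:ℝ) + β) + 1) /
        Real.Gamma (((t:ℝ) + β) + 1) ≤ G) :
    Real.exp (-(ε / (1 + ε) * Real.log n)) / ((n - 1).factorial : ℝ) ≤
      (G * Real.Gamma ((t:ℝ) + β + 1) * 2 ^ s * s / ε / Real.log ((n:ℝ) / (1 + ε)) / 2) *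
        (δ⁻¹ * Real.exp (-1) / ((n - 1).factorial : ℝ) *
          ((ε / (1 + Real.log n)) ^ ((t:ℝ) + β) / ((t:ℝ) + β))) := by
  have hn1 : (1:ℝ) < n := by exact_mod_cast by omega
  have hn4 : (4:ℝ) ≤ n := by exact_mod_cast hn
  set p : ℝ := (t:ℝ) + β with hp
  have hp1 : 1 ≤ p := by
    have : (1:ℝ) ≤ (t:ℝ) := by exact_mod_cast ht
    rw [hp]; linarith
  have hp0 : 0 < p := by linarith
  set c0 : ℝ := ε / (1 + ε) with hc0
  have hc00 : 0 < c0 := by positivity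
  set Ln : ℝ := Real.log n with hLndef
  have hLn1 : 1 < Ln := by
    rw [hLndef]
    refine (Real.lt_log_iff_exp_lt (by positivity)).mpr ?_
    have h9 := Real.exp_one_lt_d9
    nlinarith
  set M : ℝ := 1 + Ln with hM
  have hM0 : 0 < M := by rw [hM]; linarith
  set L0 : ℝ := Real.log ((n:ℝ) / (1 + ε)) with hL0
  have hL00 : 0 < L0 := by
    rw [hL0]
    refine Real.log_pos ?_
    rw [lt_div_iff₀ (by linarith)]
    linarith
  have hL0Ln : L0 ≤ Ln := by
    rw [hL0, hLndef]
    refine Real.log_le_log (by positivity) ?_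
    rw [div_le_iff₀ (by linarith)]
    nlinarith
  have hM2Ln : M ≤ 2 * Ln := by rw [hM]; linarith
  set F : ℝ := ((n - 1).factorial : ℝ) with hF
  have hF0 : 0 < F := by positivity
  set Γ1 : ℝ := Real.Gamma (p + 1) with hΓ1
  have hΓ10 : 0 < Γ1 := Real.Gamma_pos_of_pos (by linarith)
  -- core estimate
  have hone_le : (1:ℝ) ≤ 2 ^ s * s := by
    have h1 : (1:ℝ) ≤ 2 ^ s := one_le_pow₀ (by norm_num)
    have h2 : (1:ℝ) ≤ (s:ℝ) := by exact_mod_cast hs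
    nlinarith
  have hcore : Real.exp (-(c0 * Ln)) * (L0 * M ^ p) ≤
      (2 * (p + 1) / c0) ^ (p + 1) * (2 ^ s * s) := by
    have hLn0 : (0:ℝ) < Ln := by linarith
    calc Real.exp (-(c0 * Ln)) * (L0 * M ^ p)
        ≤ Real.exp (-(c0 * Ln)) * (M * M ^ p) := by
          refine mul_le_mul_of_nonneg_left ?_ (Real.exp_pos _).le
          refine mul_le_mul_of_nonneg_right (by linarith) ?_
          positivity
      _ = Real.exp (-(c0 * Ln)) * M ^ (p + 1) := by
          rw [Real.rpow_add_one hM0.ne']; ring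
      _ ≤ Real.exp (-(c0 * Ln)) * (2 * Ln) ^ (p + 1) := by
          refine mul_le_mul_of_nonneg_left ?_ (Real.exp_pos _).le
          exact Real.rpow_le_rpow hM0.le hM2Ln (by linarith)
      _ = (2:ℝ) ^ (p + 1) * (Ln ^ (p + 1) * Real.exp (-(c0 * Ln))) := by
          rw [Real.mul_rpow (by norm_num) hLn0.le]; ring
      _ ≤ (2:ℝ) ^ (p + 1) * ((p + 1) / c0) ^ (p + 1) := by
          refine mul_le_mul_of_nonneg_left ?_ (by positivity)
          exact rpow_mul_exp_neg_le hLn0 (by linarith) hc00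
      _ = (2 * ((p + 1) / c0)) ^ (p + 1) := (Real.mul_rpow (by norm_num) (by positivity)).symm
      _ = (2 * (p + 1) / c0) ^ (p + 1) := by rw [mul_div_assoc]
      _ ≤ (2 * (p + 1) / c0) ^ (p + 1) * (2 ^ s * s) :=
          le_mul_of_one_le_right (by positivity) hone_le
  -- monotonicity in G
  set GA : ℝ := 2 * δ * Real.exp 1 * p * ε ^ (1 - p) * (2 * (p + 1) / c0) ^ (p + 1) / Γ1 with hGA
  have hGA0 : 0 < GA := by positivity
  have hmono : (GA * Γ1 * 2 ^ s * s / ε / L0 / 2) *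
      (δ⁻¹ * Real.exp (-1) / F * ((ε / M) ^ p / p)) ≤
      (G * Γ1 * 2 ^ s * s / ε / L0 / 2) *
      (δ⁻¹ * Real.exp (-1) / F * ((ε / M) ^ p / p)) := by
    have hG' : GA ≤ G := hG
    gcongr
  refine le_trans ?_ hmono
  -- the exact computation with GA
  have hεp : ε ^ (1 - p) = ε / ε ^ p := by
    rw [Real.rpow_sub hε0, Real.rpow_one]
  have hdivrpow : (ε / M) ^ p = ε ^ p / M ^ p := Real.div_rpow hε0.le hM0.le p
  have hRHSeq : (GA * Γ1 * 2 ^ s * s / ε / L0 / 2) *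
      (δ⁻¹ * Real.exp (-1) / F * ((ε / M) ^ p / p)) =
      (2 * (p + 1) / c0) ^ (p + 1) * (2 ^ s * s) / (L0 * F * M ^ p) := by
    rw [hGA, hεp, hdivrpow, Real.exp_neg]
    have hεpne : ε ^ p ≠ 0 := by positivity
    have hMpne : M ^ p ≠ 0 := by positivity
    have he1 : Real.exp 1 ≠ 0 := (Real.exp_pos 1).ne'
    field_simp
  rw [hRHSeq, div_le_div_iff₀ hF0 (by positivity)]
  calc Real.exp (-(c0 * Ln)) * (L0 * F * M ^ p)
      = (Real.exp (-(c0 * Ln)) * (L0 * M ^ p)) * F := by ring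
    _ ≤ ((2 * (p + 1) / c0) ^ (p + 1) * (2 ^ s * s)) * F :=
        mul_le_mul_of_nonneg_right hcore hF0.le

set_option maxHeartbeats 1000000 in
lemma RB_ineq (hε0 : 0 < ε) (hε1 : ε < 1) (hδ : 0 < δ) (hβ : 0 < β) {t n s : ℕ}
    (ht : 1 ≤ t) (hn : 4 ≤ n) (hs : 1 ≤ s) {G : ℝ}
    (hG : 4 * δ ^ 3 * Real.exp 1 * ((t:ℝ) + β) * (((t:ℝ) + β) + 1) * (1 + ε) *
        ε ^ (-(2 * ((t:ℝ) + β))) * (4 * ((t:ℝ) + β) * (1 + ε)) ^ ((t:ℝ) + β) /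
        Real.Gamma (((t:ℝ) + β) + 1) ≤ G) :
    δ * ε ^ (s - 1) / ((n - 1).factorial : ℝ) *
        ((2 * ((t:ℝ) + β) / (Real.log n / (1 + ε))) ^ ((t:ℝ) + β) *
          (2 * (1 + ε) / Real.log n)) ≤
      (G * Real.Gamma ((t:ℝ) + β + 1) * 2 ^ s * s / ε / Real.log ((n:ℝ) / (1 + ε)) / 2) *
        (δ⁻¹ * (ε ^ (((t + s - 1 : ℕ):ℝ) + 1 + β) / (((t + s - 1 : ℕ):ℝ) + 1 + β))) *
        (δ⁻¹ * Real.exp (-1) / ((n - 1).factorial : ℝ) *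
          ((ε / (1 + Real.log n)) ^ ((t:ℝ) + β) / ((t:ℝ) + β))) := by
  have hn1 : (1:ℝ) < n := by exact_mod_cast by omega
  have hn4 : (4:ℝ) ≤ n := by exact_mod_cast hn
  set p : ℝ := (t:ℝ) + β with hp
  have hp1 : 1 ≤ p := by
    have : (1:ℝ) ≤ (t:ℝ) := by exact_mod_cast ht
    rw [hp]; linarith
  have hp0 : 0 < p := by linarith
  set Ln : ℝ := Real.log n with hLndef
  have hLn1 : 1 < Ln := by
    rw [hLndef]
    refine (Real.lt_log_iff_exp_lt (by positivity)).mpr ?_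
    have h9 := Real.exp_one_lt_d9
    nlinarith
  have hLn0 : 0 < Ln := by linarith
  set M : ℝ := 1 + Ln with hM
  have hM0 : 0 < M := by rw [hM]; linarith
  set L0 : ℝ := Real.log ((n:ℝ) / (1 + ε)) with hL0
  have hL00 : 0 < L0 := by
    rw [hL0]
    refine Real.log_pos ?_
    rw [lt_div_iff₀ (by linarith)]
    linarith
  have hL0Ln : L0 ≤ Ln := by
    rw [hL0, hLndef]
    refine Real.log_le_log (by positivity) ?_
    rw [div_le_iff₀ (by linarith)]
    nlinarith
  have hM2Ln : M ≤ 2 * Ln := by rw [hM]; linarith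
  set F : ℝ := ((n - 1).factorial : ℝ) with hF
  have hF0 : 0 < F := by positivity
  set Γ1 : ℝ := Real.Gamma (p + 1) with hΓ1
  have hΓ10 : 0 < Γ1 := Real.Gamma_pos_of_pos (by linarith)
  set q : ℝ := ((t + s - 1 : ℕ):ℝ) + 1 + β with hq
  have hcast : ((t + s - 1 : ℕ):ℝ) = (t:ℝ) + (s:ℝ) - 1 := by
    have : ((t + s - 1 : ℕ):ℝ) = ((t + s : ℕ):ℝ) - 1 := by
      rw [Nat.cast_sub (by omega)]
      norm_num
    rw [this]; push_cast; ring
  have hq0 : 0 < q := by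
    rw [hq, hcast]
    have h1 : (1:ℝ) ≤ (t:ℝ) := by exact_mod_cast ht
    have h2 : (1:ℝ) ≤ (s:ℝ) := by exact_mod_cast hs
    linarith
  have hs1 : (1:ℝ) ≤ (s:ℝ) := by exact_mod_cast hs
  have h2s : (1:ℝ) ≤ 2 ^ s := one_le_pow₀ (by norm_num)
  -- core estimate
  have hcore : q * (L0 * M ^ p) ≤ ((p + 1) * (2 ^ s * (s:ℝ))) * (Ln * (2 ^ p * Ln ^ p)) := by
    have hqle : q ≤ (p + 1) * (2 ^ s * (s:ℝ)) := by
      have h1 : q ≤ (p + 1) * (s:ℝ) := by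
        rw [hq, hcast, hp]
        nlinarith [ht, hβ, hs1]
      refine h1.trans ?_
      have : (p + 1) * (s:ℝ) * 1 ≤ (p + 1) * (s:ℝ) * 2 ^ s := by
        refine mul_le_mul_of_nonneg_left h2s (by positivity)
      nlinarith
    have hMp : M ^ p ≤ 2 ^ p * Ln ^ p := by
      have := Real.rpow_le_rpow hM0.le hM2Ln hp0.le
      rwa [Real.mul_rpow (by norm_num) hLn0.le] at this
    have hLM : L0 * M ^ p ≤ Ln * (2 ^ p * Ln ^ p) := by
      refine mul_le_mul hL0Ln hMp (by positivity) hLn0.le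
    refine mul_le_mul hqle hLM (by positivity) (by positivity)
  -- monotonicity in G
  set GB : ℝ := 4 * δ ^ 3 * Real.exp 1 * p * (p + 1) * (1 + ε) * ε ^ (-(2 * p)) *
      (4 * p * (1 + ε)) ^ p / Γ1 with hGB
  have hGB0 : 0 < GB := by positivity
  have hmono : (GB * Γ1 * 2 ^ s * s / ε / L0 / 2) *
        (δ⁻¹ * (ε ^ q / q)) * (δ⁻¹ * Real.exp (-1) / F * ((ε / M) ^ p / p)) ≤
      (G * Γ1 * 2 ^ s * s / ε / L0 / 2) *
        (δ⁻¹ * (ε ^ q / q)) * (δ⁻¹ * Real.exp (-1) / F * ((ε / M) ^ p / p)) := by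
    gcongr
  refine le_trans ?_ hmono
  -- rpow algebra
  have hεq : ε ^ q = ε ^ (s - 1 : ℕ) * ε ^ p * ε := by
    have h1 : ((s - 1 : ℕ):ℝ) = (s:ℝ) - 1 := by
      rw [Nat.cast_sub (by omega)]; norm_num
    have h2 : q = ((s:ℝ) - 1) + p + 1 := by rw [hq, hcast, hp]; ring
    rw [h2, Real.rpow_add hε0, Real.rpow_add hε0, Real.rpow_one, ← h1,
      Real.rpow_natCast ε (s - 1)]
  have hε2p : ε ^ (-(2 * p)) = (ε ^ p * ε ^ p)⁻¹ := by
    rw [Real.rpow_neg hε0.le, show 2 * p = p + p by ring, Real.rpow_add hε0]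
  have hdivrpow : (ε / M) ^ p = ε ^ p / M ^ p := Real.div_rpow hε0.le hM0.le p
  have hlamrpow : (2 * p / (Ln / (1 + ε))) ^ p = (2 * p * (1 + ε)) ^ p / Ln ^ p := by
    rw [← Real.div_rpow (by positivity) hLn0.le]
    congr 1
    field_simp
  have h4p : (4 * p * (1 + ε)) ^ p = 2 ^ p * (2 * p * (1 + ε)) ^ p := by
    rw [← Real.mul_rpow (by norm_num) (by positivity)]
    congr 1
    ring
  set W : ℝ := (2 * p * (1 + ε)) ^ p with hW
  have hW0 : 0 < W := by positivity
  set X1 : ℝ := ε ^ (s - 1 : ℕ) with hX1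
  have hX10 : 0 < X1 := by positivity
  have hLHSeq : δ * X1 / F * ((2 * p / (Ln / (1 + ε))) ^ p * (2 * (1 + ε) / Ln)) =
      δ * X1 * W * (2 * (1 + ε)) / (F * (Ln ^ p * Ln)) := by
    rw [hlamrpow]
    have hLnp : Ln ^ p ≠ 0 := by positivity
    field_simp
  have hRHSeq : (GB * Γ1 * 2 ^ s * s / ε / L0 / 2) *
        (δ⁻¹ * (ε ^ q / q)) * (δ⁻¹ * Real.exp (-1) / F * ((ε / M) ^ p / p)) =
      2 * δ * (p + 1) * (1 + ε) * (2 ^ p * W) * X1 * (2 ^ s * s) / (q * L0 * M ^ p * F) := by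
    rw [hGB, hεq, hε2p, hdivrpow, h4p, Real.exp_neg]
    have hεpne : ε ^ p ≠ 0 := by positivity
    have hMpne : M ^ p ≠ 0 := by positivity
    have he1 : Real.exp 1 ≠ 0 := (Real.exp_pos 1).ne'
    field_simp
    ring
  rw [hLHSeq, hRHSeq, div_le_div_iff₀ (by positivity) (by positivity)]
  calc δ * X1 * W * (2 * (1 + ε)) * (q * L0 * M ^ p * F)
      = (δ * X1 * W * (2 * (1 + ε)) * F) * (q * (L0 * M ^ p)) := by ring
    _ ≤ (δ * X1 * W * (2 * (1 + ε)) * F) *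
        (((p + 1) * (2 ^ s * (s:ℝ))) * (Ln * (2 ^ p * Ln ^ p))) :=
        mul_le_mul_of_nonneg_left hcore (by positivity)
    _ = 2 * δ * (p + 1) * (1 + ε) * (2 ^ p * W) * X1 * (2 ^ s * s) * (F * (Ln ^ p * Ln)) := by
        ring

end Main


set_option maxHeartbeats 1000000

/-- Corollary S.1 of the paper.
Under (A1)–(A2) there exists `G > 0` such that for all `n ≥ 4` and `0 < s ≤ n − t`,
`C(n,t,t+s) ≤ G Γ(t+β+1) 2^s s ε^{−1} E(α^{t+s−1}) (log(n/(1+ε)))^{−1}`, where the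
(possibly infinite) moment `E(α^{t+s−1}) = ∫_0^∞ α^{t+s−1} π(α) dα` is taken in `[0,∞]`
and the inequality is correspondingly stated in `[0,∞]`. -/
theorem prior_coefficient_ratio_log_bound
    (π : ℝ → ℝ) (ε δ β : ℝ) (t : ℕ)
    (hA1 : IsPriorDensity π) (hA2 : PolyAtZero π ε δ β) (ht : 1 ≤ t) :
    ∃ G : ℝ, 0 < G ∧
      ∀ n s : ℕ, 4 ≤ n → 0 < s → s ≤ n - t →
        ENNReal.ofReal (Cratio π n t (t + s))
          ≤ ENNReal.ofReal (G * Real.Gamma ((t : ℝ) + β + 1) * 2 ^ s * s / ε /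
                Real.log ((n : ℝ) / (1 + ε))) *
            ∫⁻ α in Set.Ioi (0:ℝ), ENNReal.ofReal (α ^ (t + s - 1) * π α) := by
  obtain ⟨⟨hε0, hε1⟩, hδ, hβ, hπb⟩ := id hA2
  set p : ℝ := (t:ℝ) + β with hp
  have hp1 : 1 ≤ p := by
    have : (1:ℝ) ≤ (t:ℝ) := by exact_mod_cast ht
    rw [hp]; linarith
  have hp0 : 0 < p := by linarith
  have hΓ10 : 0 < Real.Gamma (p + 1) := Real.Gamma_pos_of_pos (by linarith)
  set GA : ℝ := 2 * δ * Real.exp 1 * p * ε ^ (1 - p) *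
      (2 * (p + 1) / (ε / (1 + ε))) ^ (p + 1) / Real.Gamma (p + 1) with hGA
  set GB : ℝ := 4 * δ ^ 3 * Real.exp 1 * p * (p + 1) * (1 + ε) * ε ^ (-(2 * p)) *
      (4 * p * (1 + ε)) ^ p / Real.Gamma (p + 1) with hGB
  have hGA0 : 0 < GA := by positivity
  have hGB0 : 0 < GB := by positivity
  refine ⟨GA + GB, by positivity, ?_⟩
  intro n s hn hs hsnt
  have htn : t + s ≤ n := by omega
  have hs1 : 1 ≤ s := hs
  have hn1 : (1:ℝ) < n := by exact_mod_cast by omega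
  have hLn0 : 0 < Real.log n := Real.log_pos hn1
  have hM0 : (0:ℝ) < 1 + Real.log n := by linarith
  have hL00 : 0 < Real.log ((n:ℝ) / (1 + ε)) := by
    refine Real.log_pos ?_
    rw [lt_div_iff₀ (by linarith)]
    have : (4:ℝ) ≤ n := by exact_mod_cast hn
    linarith
  set F : ℝ := ((n - 1).factorial : ℝ) with hF
  have hF0 : 0 < F := by positivity
  -- denominator
  set It : ℝ := ∫ α in Set.Ioi (0:ℝ), α ^ t / ascFactorial α n * π α with hIt
  have hD : δ⁻¹ * Real.exp (-1) / F * ((ε / (1 + Real.log n)) ^ p / p) ≤ It :=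
    denom_lower hA1 hA2 hn ht (by omega)
  have hDpos : 0 < δ⁻¹ * Real.exp (-1) / F * ((ε / (1 + Real.log n)) ^ p / p) := by
    have h1 : 0 < (ε / (1 + Real.log n)) ^ p := Real.rpow_pos_of_pos (by positivity) p
    have h2 : 0 < δ⁻¹ * Real.exp (-1) / F := by positivity
    exact mul_pos h2 (div_pos h1 hp0)
  have hItpos : 0 < It := lt_of_lt_of_le hDpos hD
  -- Gc2 nonneg
  set Gc2 : ℝ := (GA + GB) * Real.Gamma ((t:ℝ) + β + 1) * 2 ^ s * s / ε /
      Real.log ((n:ℝ) / (1 + ε)) / 2 with hGc2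
  have hGc2nn : 0 ≤ Gc2 := by
    have h1 : 0 < (GA + GB) * Real.Gamma ((t:ℝ) + β + 1) * 2 ^ s * s := by
      have hss : (0:ℝ) < s := by exact_mod_cast hs
      have : Real.Gamma ((t:ℝ) + β + 1) = Real.Gamma (p + 1) := by rw [hp]
      refine mul_pos (mul_pos (mul_pos (by positivity) (this ▸ hΓ10)) (by positivity)) hss
    positivity
  -- numerator
  have hnum_int : IntegrableOn (fun α => α ^ (t + s) / ascFactorial α n * π α)
      (Set.Ioi (0:ℝ)) := fk_integrableOn hA1 (by omega) htn
  have hnum_nn : 0 ≤ᵐ[volume.restrict (Set.Ioi (0:ℝ))]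
      (fun α => α ^ (t + s) / ascFactorial α n * π α) := by
    refine (MeasureTheory.ae_restrict_mem measurableSet_Ioi).mono (fun α hα => ?_)
    have hα' : (0:ℝ) < α := hα
    have := ascFactorial_pos (α := α) n hα'
    have := hA1.2.1 α
    positivity
  simp only [Cratio]
  rw [← hIt, ENNReal.ofReal_div_of_pos hItpos,
    ENNReal.div_le_iff (ne_of_gt (ENNReal.ofReal_pos.mpr hItpos)) ENNReal.ofReal_ne_top,
    MeasureTheory.ofReal_integral_eq_lintegral_ofReal hnum_int hnum_nn]
  refine le_trans (numer_upper hA1 hA2 hn ht hs htn) ?_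
  set E : ℝ≥0∞ := ∫⁻ α in Set.Ioi (0:ℝ), ENNReal.ofReal (α ^ (t + s - 1) * π α) with hE
  -- part A
  have hRA := RA_ineq (t := t) (n := n) (s := s) hε0 hε1 hδ hβ ht hn hs1
    (G := GA + GB) (le_add_of_nonneg_right hGB0.le)
  have hA' : ENNReal.ofReal (Real.exp (-(ε / (1 + ε) * Real.log n)) / F) ≤
      ENNReal.ofReal Gc2 * ENNReal.ofReal It := by
    rw [← ENNReal.ofReal_mul hGc2nn]
    refine ENNReal.ofReal_le_ofReal ?_
    refine hRA.trans ?_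
    exact mul_le_mul_of_nonneg_left hD hGc2nn
  -- part B
  have hRB := RB_ineq (t := t) (n := n) (s := s) hε0 hε1 hδ hβ ht hn hs1
    (G := GA + GB) (le_add_of_nonneg_left hGA0.le)
  have hElow := moment_lower hA1 hA2 (t + s - 1)
  have hElnn : (0:ℝ) ≤ δ⁻¹ * (ε ^ (((t + s - 1 : ℕ):ℝ) + 1 + β) /
      (((t + s - 1 : ℕ):ℝ) + 1 + β)) := by
    have h1 : (0:ℝ) < ((t + s - 1 : ℕ):ℝ) + 1 + β := by positivity
    have h2 : (0:ℝ) < ε ^ (((t + s - 1 : ℕ):ℝ) + 1 + β) := Real.rpow_pos_of_pos hε0 _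
    positivity
  have hB' : ENNReal.ofReal (δ * ε ^ (s - 1) / F *
      ((2 * ((t:ℝ) + β) / (Real.log n / (1 + ε))) ^ ((t:ℝ) + β) *
        (2 * (1 + ε) / Real.log n))) ≤ (ENNReal.ofReal Gc2 * E) * ENNReal.ofReal It := by
    have hDnn : (0:ℝ) ≤ δ⁻¹ * Real.exp (-1) / F * ((ε / (1 + Real.log n)) ^ p / p) := hDpos.le
    calc ENNReal.ofReal (δ * ε ^ (s - 1) / F *
        ((2 * ((t:ℝ) + β) / (Real.log n / (1 + ε))) ^ ((t:ℝ) + β) *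
          (2 * (1 + ε) / Real.log n)))
        ≤ ENNReal.ofReal ((Gc2 * (δ⁻¹ * (ε ^ (((t + s - 1 : ℕ):ℝ) + 1 + β) /
            (((t + s - 1 : ℕ):ℝ) + 1 + β)))) * It) := by
          refine ENNReal.ofReal_le_ofReal ?_
          refine le_trans hRB ?_
          exact mul_le_mul_of_nonneg_left hD (mul_nonneg hGc2nn hElnn)
      _ = ENNReal.ofReal Gc2 * ENNReal.ofReal (δ⁻¹ * (ε ^ (((t + s - 1 : ℕ):ℝ) + 1 + β) /
            (((t + s - 1 : ℕ):ℝ) + 1 + β))) * ENNReal.ofReal It := by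
          rw [ENNReal.ofReal_mul (mul_nonneg hGc2nn hElnn), ENNReal.ofReal_mul hGc2nn]
      _ ≤ (ENNReal.ofReal Gc2 * E) * ENNReal.ofReal It := by
          exact mul_le_mul_left (mul_le_mul_right hElow _) _
  calc ENNReal.ofReal (Real.exp (-(ε / (1 + ε) * Real.log n)) / F) * E +
      ENNReal.ofReal (δ * ε ^ (s - 1) / F *
        ((2 * ((t:ℝ) + β) / (Real.log n / (1 + ε))) ^ ((t:ℝ) + β) *
          (2 * (1 + ε) / Real.log n)))
      ≤ (ENNReal.ofReal Gc2 * ENNReal.ofReal It) * E +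
        (ENNReal.ofReal Gc2 * E) * ENNReal.ofReal It :=
        add_le_add (mul_le_mul_left hA' E) hB'
    _ = (ENNReal.ofReal Gc2 + ENNReal.ofReal Gc2) * E * ENNReal.ofReal It := by ring
    _ = ENNReal.ofReal ((GA + GB) * Real.Gamma ((t:ℝ) + β + 1) * 2 ^ s * s / ε /
          Real.log ((n:ℝ) / (1 + ε))) * E * ENNReal.ofReal It := by
        rw [← ENNReal.ofReal_add hGc2nn hGc2nn]
        congr 2
        rw [hGc2]
        ring
    _ = ENNReal.ofReal ((GA + GB) * Real.Gamma ((t:ℝ) + β + 1) * 2 ^ s * s / ε /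
          Real.log ((n:ℝ) / (1 + ε))) * E * ENNReal.ofReal It := rfl
end
end

section
/- Let π be the Generalized Gamma density on (0,∞), π(α) = (p/(a^d Γ(d/p))) · α^{d−1} e^{−(α/a)^p}, with parameters a, d > 0 and p > 1. Then for every ρ > 0 there exists D > 0 such that ∫_0^∞ α^s π(α) dα ≤ D ρ^{−s} Γ(s + d) for every integer s ≥ 1. In particular, π satisfies assumption A3 for every ρ > 0. -/
open MeasureTheory Filter Topology
open scoped Classical BigOperators ENNReal

noncomputable section

/-- part of Lemma 1 of the paper.
The Generalized Gamma density `π(α) ∝ α^{d−1} e^{−(α/a)^p}` on `(0,∞)` with `p > 1`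
satisfies, for every `ρ > 0`, `∫_0^∞ α^s π(α) dα ≤ D ρ^{−s} Γ(s+d)` for all integers
`s ≥ 1` and some `D > 0`; in particular it satisfies assumption (A3) for every `ρ > 0`. -/
theorem generalized_gamma_has_subfactorial_moments
    (a d p : ℝ) (ha : 0 < a) (hd : 0 < d) (hp : 1 < p)
    (π : ℝ → ℝ)
    (hπ : ∀ α ∈ Set.Ioi (0:ℝ),
      π α = p / (a ^ d * Real.Gamma (d / p)) * (α ^ (d - 1) * Real.exp (-(α / a) ^ p))) :
    (∀ ρ : ℝ, 0 < ρ → ∃ D : ℝ, 0 < D ∧ ∀ s : ℕ, 1 ≤ s →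
        (∫ α in Set.Ioi (0:ℝ), α ^ s * π α) ≤ D * ρ⁻¹ ^ s * Real.Gamma ((s : ℝ) + d)) ∧
    (∀ ρ : ℝ, 0 < ρ → SubfactorialMoments π ρ) := by
  have hC : 0 < p / (a ^ d * Real.Gamma (d / p)) := by
    have h1 : 0 < Real.Gamma (d / p) := Real.Gamma_pos_of_pos (by positivity)
    have h2 : 0 < a ^ d := Real.rpow_pos_of_pos ha d
    positivity
  set C := p / (a ^ d * Real.Gamma (d / p)) with hCdef
  have key : ∀ ρ : ℝ, 0 < ρ → ∃ D : ℝ, 0 < D ∧ ∀ s : ℕ, 1 ≤ s →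
      (∫ α in Set.Ioi (0:ℝ), α ^ s * π α) ≤ D * ρ⁻¹ ^ s * Real.Gamma ((s : ℝ) + d) := by
    intro ρ hρ
    have hq : p.HolderConjugate (Real.conjExponent p) := Real.HolderConjugate.conjExponent hp
    set q := Real.conjExponent p with hqdef
    set K := (ρ * a) ^ q with hKdef
    have hK0 : 0 ≤ K := Real.rpow_nonneg (by positivity) q
    -- Young-type bound : ρ α ≤ (α/a)^p + K
    have hK : ∀ α : ℝ, 0 < α → ρ * α ≤ (α / a) ^ p + K := by
      intro α hα
      have h1 : ρ * α = (α / a) * (ρ * a) := by field_simp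
      have h2 : (α / a) * (ρ * a) ≤ (α / a) ^ p / p + (ρ * a) ^ q / q :=
        Real.young_inequality_of_nonneg (by positivity) (by positivity) hq
      have h3 : (α / a) ^ p / p ≤ (α / a) ^ p :=
        div_le_self (Real.rpow_nonneg (by positivity) p) hp.le
      have h4 : (ρ * a) ^ q / q ≤ (ρ * a) ^ q :=
        div_le_self hK0 hq.symm.lt.le
      linarith [h1 ▸ h2]
    refine ⟨C * Real.exp K * ρ ^ (-d), by positivity, ?_⟩
    intro s hs
    set t : ℝ := (s : ℝ) + d with htdef
    have ht : 0 < t := by positivity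
    -- the dominating integrable function
    have hint : IntegrableOn (fun α : ℝ => C * Real.exp K * (α ^ (t - 1) * Real.exp (-(ρ * α))))
        (Set.Ioi 0) := by
      have := integrableOn_rpow_mul_exp_neg_mul_rpow (s := t - 1) (p := 1) (b := ρ)
        (by linarith) zero_lt_one hρ
      have h2 : IntegrableOn (fun α : ℝ => α ^ (t - 1) * Real.exp (-(ρ * α))) (Set.Ioi 0) := by
        refine this.congr_fun (fun x hx => ?_) measurableSet_Ioi
        simp only [Real.rpow_one, neg_mul]
      exact h2.const_mul _
    -- rewrite the integrand on (0, ∞)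
    have step1 : (∫ α in Set.Ioi (0:ℝ), α ^ s * π α)
        = ∫ α in Set.Ioi (0:ℝ), C * (α ^ (t - 1) * Real.exp (-(α / a) ^ p)) := by
      refine setIntegral_congr_fun measurableSet_Ioi (fun α hα => ?_)
      have hα : (0:ℝ) < α := hα
      rw [hπ α hα]
      have : (α : ℝ) ^ s * α ^ (d - 1) = α ^ (t - 1) := by
        rw [← Real.rpow_natCast α s, ← Real.rpow_add hα]
        rw [htdef]
        ring_nf
      rw [← this]; ring
    -- compare with the dominating function
    have step2 : (∫ α in Set.Ioi (0:ℝ), C * (α ^ (t - 1) * Real.exp (-(α / a) ^ p)))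
        ≤ ∫ α in Set.Ioi (0:ℝ), C * Real.exp K * (α ^ (t - 1) * Real.exp (-(ρ * α))) := by
      refine integral_mono_of_nonneg ?_ hint ?_
      · refine Filter.eventually_of_mem (self_mem_ae_restrict measurableSet_Ioi) (fun α hα => ?_)
        have hα : (0:ℝ) < α := hα
        have := Real.rpow_nonneg hα.le (t - 1)
        positivity
      · refine Filter.eventually_of_mem (self_mem_ae_restrict measurableSet_Ioi) (fun α hα => ?_)
        have hα : (0:ℝ) < α := hα
        have hx : Real.exp (-(α / a) ^ p) ≤ Real.exp K * Real.exp (-(ρ * α)) := by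
          rw [← Real.exp_add]
          exact Real.exp_le_exp.2 (by linarith [hK α hα])
        have hxt : (0:ℝ) ≤ α ^ (t - 1) := Real.rpow_nonneg hα.le (t - 1)
        calc C * (α ^ (t - 1) * Real.exp (-(α / a) ^ p))
            ≤ C * (α ^ (t - 1) * (Real.exp K * Real.exp (-(ρ * α)))) := by
              apply mul_le_mul_of_nonneg_left _ hC.le
              exact mul_le_mul_of_nonneg_left hx hxt
          _ = C * Real.exp K * (α ^ (t - 1) * Real.exp (-(ρ * α))) := by ring
    -- compute the dominating integral
    have step3 : (∫ α in Set.Ioi (0:ℝ), C * Real.exp K * (α ^ (t - 1) * Real.exp (-(ρ * α))))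
        = C * Real.exp K * ((1 / ρ) ^ t * Real.Gamma t) := by
      rw [MeasureTheory.integral_const_mul, Real.integral_rpow_mul_exp_neg_mul_Ioi ht hρ]
    have step4 : C * Real.exp K * ((1 / ρ) ^ t * Real.Gamma t)
        = C * Real.exp K * ρ ^ (-d) * ρ⁻¹ ^ s * Real.Gamma ((s : ℝ) + d) := by
      have h1 : (1 / ρ : ℝ) ^ t = ρ⁻¹ ^ s * ρ ^ (-d) := by
        rw [htdef, Real.rpow_add (by positivity), Real.rpow_natCast, one_div,
          Real.rpow_neg hρ.le, ← Real.inv_rpow hρ.le]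
      rw [h1]; ring
    rw [step1]
    calc _ ≤ _ := step2
      _ = _ := step3
      _ = _ := step4
  refine ⟨key, fun ρ hρ => ?_⟩
  obtain ⟨D, hD, h⟩ := key ρ hρ
  refine ⟨D, d, hD, hd, fun s hs => (h s hs).trans ?_⟩
  have hsd : (0:ℝ) < (s : ℝ) + d := by positivity
  have hΓ : Real.Gamma ((s : ℝ) + d) ≤ Real.Gamma (d + (s : ℝ) + 1) := by
    have : d + (s : ℝ) + 1 = ((s : ℝ) + d) + 1 := by ring
    rw [this, Real.Gamma_add_one hsd.ne']
    have hΓpos : 0 ≤ Real.Gamma ((s : ℝ) + d) := (Real.Gamma_pos_of_pos hsd).le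
    have hs1 : (1:ℝ) ≤ (s : ℝ) + d := by
      have : (1:ℝ) ≤ (s : ℝ) := by exact_mod_cast hs
      linarith
    nlinarith
  have : (0:ℝ) ≤ D * ρ⁻¹ ^ s := by positivity
  exact mul_le_mul_of_nonneg_left hΓ this
end
end

section
/- Let (X_1, X_2, …) be an exchangeable sequence of real random variables, i.e., for every n and every permutation σ of {1,…,n}, the joint law of (X_{σ(1)},…,X_{σ(n)}) equals that of (X_1,…,X_n). Let k(·|θ) ≥ 0 be a jointly measurable kernel, q0 a density on ℝ, and for a block A ⊆ {1,…,n} let m(x_A) = ∫_ℝ ∏_{i∈A} k(x_i|θ) q0(θ) dθ, assuming m(X_{1:n}) > 0 almost surely. Then for every 1 ≤ s ≤ n, E[ Σ_{A={A_1,…,A_s}∈τ_s(n)} (∏_{j=1}^s (|A_j|−1)!/(n−1)!) · ∏_{j=1}^s m(X_{A_j})/m(X_{1:n}) ] = Σ_{a∈𝓕_s(n)} (n/(s! ∏_{j=1}^s a_j)) · E[ ∏_{j=1}^s m(X_{A_j^a})/m(X_{1:n}) ], where 𝓕_s(n) = {a ∈ {1,…,n}^s : Σ_{j=1}^s a_j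 = n}, A^a is any fixed partition in τ_s(n) with |A_j^a| = a_j for each j, and the equality holds in [0,∞]. -/
open MeasureTheory Filter Topology
open scoped Classical BigOperators ENNReal

noncomputable section

/-- `𝓕_s(n)`: the compositions of `n` into `s` positive integer parts. -/
def compositions (n s : ℕ) : Finset (Fin s → ℕ) :=
  (Fintype.piFinset fun _ : Fin s => Finset.Icc 1 n).filter fun a => ∑ j, a j = n

/- ========= auxiliary lemmas ========= -/

lemma mem_compositions {n s : ℕ} {a : Fin s → ℕ} :
    a ∈ compositions n s ↔ (∀ j, 1 ≤ a j ∧ a j ≤ n) ∧ ∑ j, a j = n := by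
  simp [compositions, Fintype.mem_piFinset, Finset.mem_Icc]

lemma IsPartitionOf.disjoint' {n : ℕ} {P : Finset (Finset (Fin n))} (hP : IsPartitionOf P)
    {B B' : Finset (Fin n)} (hB : B ∈ P) (hB' : B' ∈ P) (hne : B ≠ B') : Disjoint B B' := by
  rw [Finset.disjoint_left]
  intro i hi hi'
  obtain ⟨C, -, hCu⟩ := hP.2 i
  exact hne ((hCu B ⟨hB, hi⟩).trans (hCu B' ⟨hB', hi'⟩).symm)

lemma IsPartitionOf.sum_card {n : ℕ} {P : Finset (Finset (Fin n))} (hP : IsPartitionOf P) :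
    ∑ B ∈ P, B.card = n := by
  have h1 : (P.biUnion id).card = ∑ B ∈ P, B.card :=
    Finset.card_biUnion fun B hB B' hB' hne => hP.disjoint' hB hB' hne
  have h2 : P.biUnion id = Finset.univ := by
    ext i
    simp only [Finset.mem_biUnion, id, Finset.mem_univ, iff_true]
    obtain ⟨B, ⟨hB, hiB⟩, -⟩ := hP.2 i
    exact ⟨B, hB, hiB⟩
  rw [← h1, h2, Finset.card_univ, Fintype.card_fin]

lemma exists_unique_block {n s : ℕ} {C : Fin s → Finset (Fin n)}
    (hdisj : ∀ j l, j ≠ l → Disjoint (C j) (C l))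
    (hsum : ∑ j, (C j).card = n) (i : Fin n) : ∃! j, i ∈ C j := by
  have hbu : Finset.univ.biUnion C = Finset.univ := by
    apply Finset.eq_univ_of_card
    rw [Finset.card_biUnion (fun j _ l _ h => hdisj j l h), hsum, Fintype.card_fin]
  have hi : i ∈ Finset.univ.biUnion C := hbu ▸ Finset.mem_univ i
  rw [Finset.mem_biUnion] at hi
  obtain ⟨j, -, hj⟩ := hi
  refine ⟨j, hj, fun l hl => ?_⟩
  by_contra hne
  exact (Finset.disjoint_left.1 (hdisj l j hne) hl) hj

lemma card_perm_comp {n s : ℕ} (c d : Fin n → Fin s)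
    (h : ∀ j, (Finset.univ.filter fun i => c i = j).card
            = (Finset.univ.filter fun i => d i = j).card) :
    (Finset.univ.filter fun σ : Equiv.Perm (Fin n) => d ∘ σ = c).card
      = ∏ j, ((Finset.univ.filter fun i => c i = j).card).factorial := by
  classical
  have e : {σ : Equiv.Perm (Fin n) // d ∘ σ = c}
      ≃ ∀ j : Fin s, ({i : Fin n // c i = j} ≃ {i : Fin n // d i = j}) := by
    refine
    { toFun := fun σ j =>
        { toFun := fun i => ⟨σ.1 i.1, by
            have := congrFun σ.2 i.1; simp only [Function.comp_apply] at this
            rw [this, i.2]⟩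
          invFun := fun i => ⟨σ.1.symm i.1, by
            have := congrFun σ.2 (σ.1.symm i.1)
            simp only [Function.comp_apply, Equiv.apply_symm_apply] at this
            rw [← this, i.2]⟩
          left_inv := fun i => by simp
          right_inv := fun i => by simp }
      invFun := fun F =>
        ⟨(Equiv.sigmaFiberEquiv c).symm.trans
          ((Equiv.sigmaCongrRight F).trans (Equiv.sigmaFiberEquiv d)), by
          funext i; simp [Equiv.sigmaFiberEquiv, Equiv.sigmaCongrRight]
          exact (F (c i) ⟨i, rfl⟩).2⟩
      left_inv := fun σ => by
        ext i
        simp [Equiv.sigmaFiberEquiv, Equiv.sigmaCongrRight]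
      right_inv := fun F => by
        funext j
        ext i
        obtain ⟨i, hi⟩ := i
        subst hi
        simp [Equiv.sigmaFiberEquiv, Equiv.sigmaCongrRight] }
  have h1 : (Finset.univ.filter fun σ : Equiv.Perm (Fin n) => d ∘ σ = c).card
      = Fintype.card {σ : Equiv.Perm (Fin n) // d ∘ σ = c} := by
    rw [Fintype.card_subtype]
  rw [h1, Fintype.card_congr e, Fintype.card_pi]
  refine Finset.prod_congr rfl fun j _ => ?_
  rw [Fintype.card_equiv (Fintype.equivOfCardEq (by
    rw [Fintype.card_subtype, Fintype.card_subtype]; exact h j))]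
  rw [Fintype.card_subtype]

lemma inj_of_image_eq {n s : ℕ} {P : Finset (Finset (Fin n))} (hP : P.card = s)
    {π : Fin s → Finset (Fin n)} (hπ : Finset.univ.image π = P) :
    Function.Injective π := by
  have hcard : (Finset.univ.image π).card = (Finset.univ : Finset (Fin s)).card := by
    rw [hπ, hP, Finset.card_univ, Fintype.card_fin]
  have h2 := Finset.injOn_of_card_image_eq hcard
  intro a b hab
  exact h2 (Finset.mem_coe.2 (Finset.mem_univ a)) (Finset.mem_coe.2 (Finset.mem_univ b)) hab

lemma card_enumerations {n s : ℕ} {P : Finset (Finset (Fin n))} (hP : P.card = s) :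
    ((Finset.univ : Finset (Fin s → Finset (Fin n))).filter
        fun π => Finset.univ.image π = P).card = s.factorial := by
  classical
  have himg : ((Finset.univ : Finset (Fin s → Finset (Fin n))).filter
        fun π => Finset.univ.image π = P)
      = Finset.image (fun e : Fin s ≃ {B // B ∈ P} => fun j => (e j : Finset (Fin n)))
          Finset.univ := by
    ext π
    simp only [Finset.mem_filter, Finset.mem_univ, true_and, Finset.mem_image]
    constructor
    · intro hπ
      have hinj : Function.Injective π := inj_of_image_eq hP hπ
      have hmem : ∀ j, π j ∈ P := fun j => by
        rw [← hπ]; exact Finset.mem_image_of_mem π (Finset.mem_univ j)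
      have hbij : Function.Bijective (fun j => (⟨π j, hmem j⟩ : {B // B ∈ P})) := by
        rw [Fintype.bijective_iff_injective_and_card]
        refine ⟨fun a b hab => hinj (congrArg Subtype.val hab), ?_⟩
        rw [Fintype.card_coe, hP, Fintype.card_fin]
      exact ⟨Equiv.ofBijective _ hbij, rfl⟩
    · rintro ⟨e, rfl⟩
      ext B
      simp only [Finset.mem_image, Finset.mem_univ, true_and]
      constructor
      · rintro ⟨j, rfl⟩; exact (e j).2
      · intro hB; exact ⟨e.symm ⟨B, hB⟩, by simp⟩
  have hinjΦ : Function.Injective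
      (fun e : Fin s ≃ {B // B ∈ P} => fun j => (e j : Finset (Fin n))) := by
    intro e₁ e₂ h
    have h3 : ∀ j, e₁ j = e₂ j := fun j => Subtype.ext (by simpa using congrFun h j)
    exact Equiv.ext h3
  rw [himg, Finset.card_image_of_injective _ hinjΦ, Finset.card_univ,
    Fintype.card_equiv (Fintype.equivOfCardEq (by rw [Fintype.card_coe, hP, Fintype.card_fin])),
    Fintype.card_fin]

lemma fiber_card {n s : ℕ}
    (A : (Fin s → ℕ) → Fin s → Finset (Fin n))
    (hAcard : ∀ a ∈ compositions n s, ∀ j, (A a j).card = a j)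
    (hAdisj : ∀ a ∈ compositions n s, ∀ j l, j ≠ l → Disjoint (A a j) (A a l))
    {P : Finset (Finset (Fin n))} (hPpart : IsPartitionOf P) (hPcard : P.card = s) :
    (((compositions n s) ×ˢ (Finset.univ : Finset (Equiv.Perm (Fin n)))).filter
        fun p => (Finset.univ.image fun j => (A p.1 j).image p.2) = P).card
      = s.factorial * ∏ B ∈ P, (B.card).factorial := by
  classical
  set T : Finset (Fin s → Finset (Fin n)) :=
    Finset.univ.filter (fun π => Finset.univ.image π = P) with hT
  set fib := ((compositions n s) ×ˢ (Finset.univ : Finset (Equiv.Perm (Fin n)))).filter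
        fun p => (Finset.univ.image fun j => (A p.1 j).image p.2) = P with hfib
  have hmaps : ∀ p ∈ fib, (fun j => (A p.1 j).image p.2) ∈ T := by
    rintro p hp
    rw [hfib, Finset.mem_filter] at hp
    rw [hT, Finset.mem_filter]
    exact ⟨Finset.mem_univ _, hp.2⟩
  rw [Finset.card_eq_sum_card_fiberwise hmaps]
  have hsub : ∀ π ∈ T,
      (fib.filter fun p => (fun j => (A p.1 j).image p.2) = π).card
        = ∏ j, ((π j).card).factorial := by
    intro π hπT
    rw [hT, Finset.mem_filter] at hπT
    have hπ : Finset.univ.image π = P := hπT.2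
    have hπinj : Function.Injective π := inj_of_image_eq hPcard hπ
    have hπmem : ∀ j, π j ∈ P := fun j => hπ ▸ Finset.mem_image_of_mem π (Finset.mem_univ j)
    have hπne : ∀ j, (π j).Nonempty := fun j => hPpart.1 _ (hπmem j)
    have hπdisj : ∀ j l, j ≠ l → Disjoint (π j) (π l) := fun j l hjl =>
      hPpart.disjoint' (hπmem j) (hπmem l) (fun h => hjl (hπinj h))
    have hπsum : ∑ j, (π j).card = n := by
      have := Finset.sum_image (s := (Finset.univ : Finset (Fin s))) (g := π)
        (f := Finset.card) (fun j _ l _ h => hπinj h)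
      rw [hπ] at this
      rw [← this]
      exact hPpart.sum_card
    set b : Fin s → ℕ := fun j => (π j).card with hb
    have hbcomp : b ∈ compositions n s := by
      rw [mem_compositions]
      refine ⟨fun j => ⟨Finset.card_pos.2 (hπne j), ?_⟩, hπsum⟩
      calc (π j).card ≤ Fintype.card (Fin n) := Finset.card_le_univ _
        _ = n := Fintype.card_fin n
    have hAbcard : ∀ j, (A b j).card = b j := hAcard b hbcomp
    have hAbdisj := hAdisj b hbcomp
    have hAbsum : ∑ j, (A b j).card = n := by simp only [hAbcard]; exact hπsum
    have EUBA : ∀ i, ∃! j, i ∈ A b j := exists_unique_block hAbdisj hAbsum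
    have EUBπ : ∀ i, ∃! j, i ∈ π j := exists_unique_block hπdisj hπsum
    set c : Fin n → Fin s := fun i => Fintype.choose _ (EUBA i) with hc
    set d : Fin n → Fin s := fun i => Fintype.choose _ (EUBπ i) with hd
    have hcmem : ∀ i, i ∈ A b (c i) := fun i => Fintype.choose_spec _ (EUBA i)
    have hceq : ∀ i j, i ∈ A b j → c i = j := fun i j hj => (EUBA i).unique (hcmem i) hj
    have hdmem : ∀ i, i ∈ π (d i) := fun i => Fintype.choose_spec _ (EUBπ i)
    have hdeq : ∀ i j, i ∈ π j → d i = j := fun i j hj => (EUBπ i).unique (hdmem i) hj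
    have hcfib : ∀ j, (Finset.univ.filter fun i => c i = j) = A b j := by
      intro j
      ext i
      simp only [Finset.mem_filter, Finset.mem_univ, true_and]
      exact ⟨fun h => h ▸ hcmem i, hceq i j⟩
    have hdfib : ∀ j, (Finset.univ.filter fun i => d i = j) = π j := by
      intro j
      ext i
      simp only [Finset.mem_filter, Finset.mem_univ, true_and]
      exact ⟨fun h => h ▸ hdmem i, hdeq i j⟩
    have hsubfib : (fib.filter fun p => (fun j => (A p.1 j).image p.2) = π)
        = (Finset.univ.filter fun σ : Equiv.Perm (Fin n) => d ∘ σ = c).image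
            (fun σ => (b, σ)) := by
      ext ⟨a, σ⟩
      simp only [hfib, Finset.mem_filter, Finset.mem_product, Finset.mem_univ, true_and,
        and_true, Finset.mem_image]
      constructor
      · rintro ⟨⟨ha, hMp⟩, hΨ⟩
        have hab : a = b := by
          funext j
          have h1 := congrFun hΨ j
          have h2 : ((A a j).image σ).card = (π j).card := by rw [h1]
          rw [Finset.card_image_of_injective _ σ.injective, hAcard a ha j] at h2
          exact h2
        subst hab
        refine ⟨σ, ?_, rfl⟩
        funext i
        simp only [Function.comp_apply]
        apply hdeq
        have h1 := congrFun hΨ (c i)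
        rw [← h1]
        exact Finset.mem_image_of_mem _ (hcmem i)
      · rintro ⟨σ', hσ', heq⟩
        injection heq with h1 h2
        subst h1
        subst h2
        have hσc : d ∘ σ' = c := hσ'
        have hΨeq : ∀ j, (A b j).image σ' = π j := by
          intro j
          have hsubset : (A b j).image σ' ⊆ π j := by
            intro x hx
            obtain ⟨i, hi, rfl⟩ := Finset.mem_image.1 hx
            have hci : c i = j := hceq i j hi
            have hdi : d (σ' i) = j := by
              have := congrFun hσc i
              simp only [Function.comp_apply] at this
              rw [this, hci]
            have := hdmem (σ' i)
            rwa [hdi] at this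
          refine Finset.eq_of_subset_of_card_le hsubset ?_
          rw [Finset.card_image_of_injective _ σ'.injective, hAbcard j]
        have hΨ : (fun j => (A b j).image σ') = π := funext hΨeq
        refine ⟨⟨hbcomp, ?_⟩, hΨ⟩
        rw [show (fun j => (A b j).image σ') = π from hΨ, hπ]
    rw [hsubfib, Finset.card_image_of_injective _ (fun σ₁ σ₂ h => by
      injection h), card_perm_comp c d (fun j => by rw [hcfib, hdfib, hAbcard j])]
    refine Finset.prod_congr rfl fun j _ => ?_
    rw [hcfib, hAbcard j]
  rw [Finset.sum_congr rfl hsub]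
  have h2 : ∀ π ∈ T, ∏ j, ((π j).card).factorial = ∏ B ∈ P, (B.card).factorial := by
    intro π hπT
    rw [hT, Finset.mem_filter] at hπT
    have hπ := hπT.2
    have hπinj := inj_of_image_eq hPcard hπ
    rw [← hπ, Finset.prod_image (fun j _ l _ h => hπinj h)]
  rw [Finset.sum_congr rfl h2, Finset.sum_const, card_enumerations hPcard, smul_eq_mul]

/-- Core combinatorial identity. -/
lemma core_comb {n s : ℕ}
    (A : (Fin s → ℕ) → Fin s → Finset (Fin n))
    (hAcard : ∀ a ∈ compositions n s, ∀ j, (A a j).card = a j)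
    (hAdisj : ∀ a ∈ compositions n s, ∀ j l, j ≠ l → Disjoint (A a j) (A a l))
    (f : Finset (Finset (Fin n)) → ℝ≥0∞) :
    ∑ a ∈ compositions n s, ∑ σ : Equiv.Perm (Fin n),
        (∏ j, ((a j).factorial : ℝ≥0∞))⁻¹
          * f (Finset.univ.image fun j => (A a j).image σ)
      = (s.factorial : ℝ≥0∞) * ∑ P ∈ partitionsInto n s, f P := by
  classical
  set M : (Fin s → ℕ) × Equiv.Perm (Fin n) → Finset (Finset (Fin n)) :=
    fun p => Finset.univ.image fun j => (A p.1 j).image p.2 with hM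
  set g : (Fin s → ℕ) × Equiv.Perm (Fin n) → ℝ≥0∞ :=
    fun p => (∏ j, ((p.1 j).factorial : ℝ≥0∞))⁻¹ * f (M p) with hg
  have hLHS : ∑ a ∈ compositions n s, ∑ σ : Equiv.Perm (Fin n),
        (∏ j, ((a j).factorial : ℝ≥0∞))⁻¹
          * f (Finset.univ.image fun j => (A a j).image σ)
      = ∑ p ∈ (compositions n s) ×ˢ (Finset.univ : Finset (Equiv.Perm (Fin n))), g p := by
    rw [Finset.sum_product]
  rw [hLHS]
  have hblocks : ∀ a ∈ compositions n s, ∀ σ : Equiv.Perm (Fin n),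
      (∀ j, ((A a j).image σ).card = a j) ∧
      (∀ j l, j ≠ l → Disjoint ((A a j).image σ) ((A a l).image σ)) := by
    intro a ha σ
    constructor
    · intro j
      rw [Finset.card_image_of_injective _ σ.injective, hAcard a ha j]
    · intro j l hjl
      rw [Finset.disjoint_image σ.injective]
      exact hAdisj a ha j l hjl
  have hCinj : ∀ a ∈ compositions n s, ∀ σ : Equiv.Perm (Fin n),
      Function.Injective fun j => (A a j).image σ := by
    intro a ha σ j l hjl
    simp only at hjl
    by_contra hne
    have hd := ((hblocks a ha σ).2 j l hne)
    rw [hjl] at hd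
    have hnonempty : ((A a l).image σ).Nonempty := by
      rw [← Finset.card_pos, (hblocks a ha σ).1 l]
      exact (mem_compositions.1 ha).1 l |>.1
    exact hnonempty.ne_empty ((Finset.disjoint_self_iff_empty _).1 hd)
  have hmaps : ∀ p ∈ (compositions n s) ×ˢ (Finset.univ : Finset (Equiv.Perm (Fin n))),
      M p ∈ partitionsInto n s := by
    rintro ⟨a, σ⟩ hp
    have ha : a ∈ compositions n s := (Finset.mem_product.1 hp).1
    obtain ⟨hcard, hdisj⟩ := hblocks a ha σ
    have hsum : ∑ j, ((A a j).image σ).card = n := by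
      simp only [hcard]; exact (mem_compositions.1 ha).2
    have hEUB : ∀ i, ∃! j, i ∈ (A a j).image σ := exists_unique_block hdisj hsum
    simp only [partitionsInto, Finset.mem_filter, Finset.mem_univ, true_and]
    refine ⟨⟨?_, ?_⟩, ?_⟩
    · intro B hB
      obtain ⟨j, -, rfl⟩ := Finset.mem_image.1 hB
      rw [← Finset.card_pos, hcard j]
      exact ((mem_compositions.1 ha).1 j).1
    · intro i
      obtain ⟨j, hj, hju⟩ := hEUB i
      refine ⟨(A a j).image σ, ⟨Finset.mem_image_of_mem _ (Finset.mem_univ j), hj⟩, ?_⟩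
      rintro B ⟨hB, hiB⟩
      obtain ⟨l, -, rfl⟩ := Finset.mem_image.1 hB
      rw [hju l hiB]
    · rw [Finset.card_image_of_injective _ (hCinj a ha σ), Finset.card_univ, Fintype.card_fin]
  rw [← Finset.sum_fiberwise_of_maps_to hmaps g, Finset.mul_sum]
  refine Finset.sum_congr rfl fun P hP => ?_
  have hPfacts : IsPartitionOf P ∧ P.card = s := by
    simpa [partitionsInto] using hP
  set K : ℝ≥0∞ := ((∏ B ∈ P, (B.card).factorial : ℕ) : ℝ≥0∞) with hK
  have hfib_val : ∀ p ∈ (((compositions n s) ×ˢ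
        (Finset.univ : Finset (Equiv.Perm (Fin n)))).filter fun p => M p = P),
      g p = (K : ℝ≥0∞)⁻¹ * f P := by
    rintro ⟨a, σ⟩ hp
    rw [Finset.mem_filter] at hp
    obtain ⟨hp1, hp2⟩ := hp
    have ha : a ∈ compositions n s := (Finset.mem_product.1 hp1).1
    have hprod : ∏ j, ((a j).factorial : ℝ≥0∞) = K := by
      rw [hK]
      push_cast
      rw [← hp2]
      simp only [hM]
      rw [Finset.prod_image (fun j _ l _ h => hCinj a ha σ h)]
      refine Finset.prod_congr rfl fun j _ => ?_
      rw [(hblocks a ha σ).1 j]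
    rw [hg]
    simp only
    rw [hprod, hp2]
  rw [Finset.sum_congr rfl hfib_val, Finset.sum_const]
  have hfib_card : (((compositions n s) ×ˢ
        (Finset.univ : Finset (Equiv.Perm (Fin n)))).filter fun p => M p = P).card
      = s.factorial * ∏ B ∈ P, (B.card).factorial :=
    fiber_card A hAcard hAdisj hPfacts.1 hPfacts.2
  rw [hfib_card]
  have hKne : K ≠ 0 := by
    rw [hK]
    simp only [ne_eq, Nat.cast_eq_zero]
    positivity
  have hKtop : K ≠ ⊤ := by
    rw [hK]; exact ENNReal.natCast_ne_top _
  rw [nsmul_eq_mul]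
  push_cast
  rw [hK]
  push_cast
  rw [mul_assoc, mul_comm ((∏ B ∈ P, ((B.card).factorial : ℝ≥0∞)))⁻¹ (f P), ← mul_assoc,
    mul_assoc (s.factorial : ℝ≥0∞)]
  congr 1
  rw [mul_comm (f P), ← mul_assoc, ENNReal.mul_inv_cancel, one_mul]
  · simp only [ne_eq, Finset.prod_eq_zero_iff, not_exists]
    intro B
    simp [Nat.factorial_ne_zero]
  · exact ENNReal.prod_ne_top fun B hB => ENNReal.natCast_ne_top _

lemma clusterMarginal_nonneg (k : ℝ → ℝ → ℝ) (hknn : ∀ x θ, 0 ≤ k x θ)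
    (q0 : ℝ → ℝ) (hq0nn : ∀ θ, 0 ≤ q0 θ) {n : ℕ} (x : Fin n → ℝ) (B : Finset (Fin n)) :
    0 ≤ clusterMarginal k q0 x B := by
  apply integral_nonneg
  intro θ
  exact mul_nonneg (Finset.prod_nonneg fun i _ => hknn _ _) (hq0nn θ)

lemma clusterMarginal_measurable (k : ℝ → ℝ → ℝ) (hkmeas : Measurable (Function.uncurry k))
    (q0 : ℝ → ℝ) (hq0meas : Measurable q0) {n : ℕ} (B : Finset (Fin n)) :
    Measurable fun x : Fin n → ℝ => clusterMarginal k q0 x B := by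
  have h : Measurable fun p : (Fin n → ℝ) × ℝ => (∏ i ∈ B, k (p.1 i) p.2) * q0 p.2 := by
    apply Measurable.mul
    · apply Finset.measurable_prod
      intro i _
      have : (fun p : (Fin n → ℝ) × ℝ => k (p.1 i) p.2)
          = Function.uncurry k ∘ (fun p : (Fin n → ℝ) × ℝ => (p.1 i, p.2)) := rfl
      rw [this]
      exact hkmeas.comp (((measurable_pi_apply i).comp measurable_fst).prodMk measurable_snd)
    · exact hq0meas.comp measurable_snd
  exact (h.stronglyMeasurable.integral_prod_right').measurable

lemma clusterMarginal_relabel (k : ℝ → ℝ → ℝ) (q0 : ℝ → ℝ) {n : ℕ} (x : Fin n → ℝ)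
    (σ : Equiv.Perm (Fin n)) (B : Finset (Fin n)) :
    clusterMarginal k q0 x (B.image σ) = clusterMarginal k q0 (fun i => x (σ i)) B := by
  unfold clusterMarginal
  congr 1
  funext θ
  congr 1
  rw [Finset.prod_image (fun i _ l _ h => σ.injective h)]

lemma lintegral_exchange {Ω : Type*} [MeasurableSpace Ω] (μ : Measure Ω)
    (X : ℕ → Ω → ℝ) (hXm : ∀ i, Measurable (X i))
    (hexch : ∀ (n : ℕ) (σ : Equiv.Perm (Fin n)),
      Measure.map (fun ω => fun i : Fin n => X (σ i) ω) μ =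
        Measure.map (fun ω => fun i : Fin n => X (i : ℕ) ω) μ)
    (n : ℕ) (σ : Equiv.Perm (Fin n)) {F : (Fin n → ℝ) → ℝ≥0∞} (hF : Measurable F) :
    ∫⁻ ω, F (fun i => X (σ i) ω) ∂μ = ∫⁻ ω, F (fun i => X (i : ℕ) ω) ∂μ := by
  have h1 : Measurable fun ω => fun i : Fin n => X (σ i) ω :=
    measurable_pi_lambda _ fun i => hXm _
  have h2 : Measurable fun ω => fun i : Fin n => X (i : ℕ) ω :=
    measurable_pi_lambda _ fun i => hXm _
  rw [← lintegral_map hF h1, ← lintegral_map hF h2, hexch n σ]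

lemma coeff_eq {n s : ℕ} (hn : 1 ≤ n) (a : Fin s → ℕ) (ha : ∀ j, 1 ≤ a j) :
    (∏ j, ((a j).factorial : ℝ≥0∞))⁻¹ * ((n.factorial : ℝ≥0∞) *
        ENNReal.ofReal ((∏ j, (((a j) - 1).factorial : ℝ)) / ((n - 1).factorial : ℝ)))
      = (s.factorial : ℝ≥0∞) *
        ENNReal.ofReal ((n : ℝ) / ((s.factorial : ℝ) * ∏ j, (a j : ℝ))) := by
  have h1 : (∏ j, ((a j).factorial : ℝ≥0∞)) = ENNReal.ofReal (∏ j, ((a j).factorial : ℝ)) := by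
    rw [ENNReal.ofReal_prod_of_nonneg (fun j _ => by positivity)]
    exact Finset.prod_congr rfl fun j _ => by rw [ENNReal.ofReal_natCast]
  have hprodpos : (0:ℝ) < ∏ j, ((a j).factorial : ℝ) := by positivity
  rw [h1, ← ENNReal.ofReal_inv_of_pos hprodpos, ← ENNReal.ofReal_natCast n.factorial,
    ← ENNReal.ofReal_natCast s.factorial,
    ← ENNReal.ofReal_mul (by positivity), ← ENNReal.ofReal_mul (by positivity),
    ← ENNReal.ofReal_mul (by positivity)]
  congr 1
  have hfact : ∀ j, ((a j).factorial : ℝ) = (a j : ℝ) * (((a j) - 1).factorial : ℝ) := by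
    intro j
    rw [← Nat.cast_mul, Nat.mul_factorial_pred (by have := ha j; omega)]
  have hnfact : (n.factorial : ℝ) = (n : ℝ) * ((n - 1).factorial : ℝ) := by
    rw [← Nat.cast_mul, Nat.mul_factorial_pred (by omega)]
  rw [Finset.prod_congr rfl (fun j _ => hfact j), Finset.prod_mul_distrib, hnfact]
  have h2 : (0:ℝ) < ∏ j, (a j : ℝ) :=
    Finset.prod_pos fun j _ => by exact_mod_cast Nat.lt_of_lt_of_le Nat.zero_lt_one (ha j)
  have h3 : (0:ℝ) < ∏ j, (((a j) - 1).factorial : ℝ) := by positivity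
  have h4 : (0:ℝ) < ((n - 1).factorial : ℝ) := by positivity
  have h5 : (0:ℝ) < (s.factorial : ℝ) := by positivity
  field_simp

/-- Lemma 3 of the paper.
For an exchangeable sequence `(X_1, X_2, …)`, the expectation of
`Σ_{A∈τ_s(n)} (∏_j (|A_j|−1)!/(n−1)!) ∏_j m(X_{A_j})/m(X_{1:n})` equals
`Σ_{a∈𝓕_s(n)} (n/(s! ∏_j a_j)) E[∏_j m(X_{A_j^a})/m(X_{1:n})]`, where `A^a` is any fixed
partition with block sizes `a`; the equality is taken in `[0,∞]`. -/
theorem exchangeable_partition_ratio_expectation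
    {Ω : Type*} [MeasurableSpace Ω] (μ : Measure Ω) [IsProbabilityMeasure μ]
    (X : ℕ → Ω → ℝ) (hXm : ∀ i, Measurable (X i))
    (hexch : ∀ (n : ℕ) (σ : Equiv.Perm (Fin n)),
      Measure.map (fun ω => fun i : Fin n => X (σ i) ω) μ =
        Measure.map (fun ω => fun i : Fin n => X (i : ℕ) ω) μ)
    (k : ℝ → ℝ → ℝ) (hkmeas : Measurable (Function.uncurry k)) (hknn : ∀ x θ, 0 ≤ k x θ)
    (q0 : ℝ → ℝ) (hq0meas : Measurable q0) (hq0nn : ∀ θ, 0 ≤ q0 θ)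
    (hq0int : (∫ θ, q0 θ) = 1)
    (n s : ℕ) (hs : 1 ≤ s) (hsn : s ≤ n)
    (hpos : ∀ᵐ ω ∂μ,
      0 < clusterMarginal k q0 (fun i : Fin n => X i ω) (Finset.univ : Finset (Fin n)))
    (A : (Fin s → ℕ) → Fin s → Finset (Fin n))
    (hAcard : ∀ a ∈ compositions n s, ∀ j, (A a j).card = a j)
    (hAdisj : ∀ a ∈ compositions n s, ∀ j l, j ≠ l → Disjoint (A a j) (A a l)) :
    (∫⁻ ω, ENNReal.ofReal (∑ P ∈ partitionsInto n s,
        (∏ B ∈ P, ((B.card - 1).factorial : ℝ)) / ((n - 1).factorial : ℝ) *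
          ((∏ B ∈ P, clusterMarginal k q0 (fun i : Fin n => X i ω) B) /
            clusterMarginal k q0 (fun i : Fin n => X i ω) Finset.univ)) ∂μ)
      = ∑ a ∈ compositions n s,
          ENNReal.ofReal ((n : ℝ) / ((s.factorial : ℝ) * ∏ j, (a j : ℝ))) *
          ∫⁻ ω, ENNReal.ofReal
            ((∏ j, clusterMarginal k q0 (fun i : Fin n => X i ω) (A a j)) /
              clusterMarginal k q0 (fun i : Fin n => X i ω) Finset.univ) ∂μ := by
  classical
  have hn : 1 ≤ n := le_trans hs hsn
  have hXM : Measurable fun ω => fun i : Fin n => X (i : ℕ) ω :=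
    measurable_pi_lambda _ fun i => hXm _
  have hmB : ∀ B : Finset (Fin n), Measurable fun x : Fin n → ℝ => clusterMarginal k q0 x B :=
    fun B => clusterMarginal_measurable k hkmeas q0 hq0meas B
  have hmnn : ∀ (x : Fin n → ℝ) (B : Finset (Fin n)), 0 ≤ clusterMarginal k q0 x B :=
    fun x B => clusterMarginal_nonneg k hknn q0 hq0nn x B
  have hHmeas : ∀ P : Finset (Finset (Fin n)), Measurable fun x : Fin n → ℝ =>
      ENNReal.ofReal ((∏ B ∈ P, clusterMarginal k q0 x B) / clusterMarginal k q0 x Finset.univ) :=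
    fun P => ((Finset.measurable_prod P fun B _ => hmB B).div (hmB Finset.univ)).ennreal_ofReal
  have hHnn : ∀ (P : Finset (Finset (Fin n))) (x : Fin n → ℝ),
      0 ≤ (∏ B ∈ P, clusterMarginal k q0 x B) / clusterMarginal k q0 x Finset.univ :=
    fun P x => div_nonneg (Finset.prod_nonneg fun B _ => hmnn x B) (hmnn x _)
  have hwnn : ∀ P : Finset (Finset (Fin n)),
      0 ≤ (∏ B ∈ P, ((B.card - 1).factorial : ℝ)) / ((n - 1).factorial : ℝ) := by
    intro P; positivity
  -- Step 1: decompose the left-hand side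
  have hstep1 : (∫⁻ ω, ENNReal.ofReal (∑ P ∈ partitionsInto n s,
        (∏ B ∈ P, ((B.card - 1).factorial : ℝ)) / ((n - 1).factorial : ℝ) *
          ((∏ B ∈ P, clusterMarginal k q0 (fun i : Fin n => X i ω) B) /
            clusterMarginal k q0 (fun i : Fin n => X i ω) Finset.univ)) ∂μ)
      = ∑ P ∈ partitionsInto n s,
          ENNReal.ofReal ((∏ B ∈ P, ((B.card - 1).factorial : ℝ)) / ((n - 1).factorial : ℝ)) *
          ∫⁻ ω, ENNReal.ofReal
            ((∏ B ∈ P, clusterMarginal k q0 (fun i : Fin n => X i ω) B) /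
              clusterMarginal k q0 (fun i : Fin n => X i ω) Finset.univ) ∂μ := by
    calc (∫⁻ ω, ENNReal.ofReal (∑ P ∈ partitionsInto n s,
        (∏ B ∈ P, ((B.card - 1).factorial : ℝ)) / ((n - 1).factorial : ℝ) *
          ((∏ B ∈ P, clusterMarginal k q0 (fun i : Fin n => X i ω) B) /
            clusterMarginal k q0 (fun i : Fin n => X i ω) Finset.univ)) ∂μ)
        = ∫⁻ ω, ∑ P ∈ partitionsInto n s,
            ENNReal.ofReal ((∏ B ∈ P, ((B.card - 1).factorial : ℝ)) / ((n - 1).factorial : ℝ)) *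
            ENNReal.ofReal
              ((∏ B ∈ P, clusterMarginal k q0 (fun i : Fin n => X i ω) B) /
                clusterMarginal k q0 (fun i : Fin n => X i ω) Finset.univ) ∂μ := by
          refine lintegral_congr fun ω => ?_
          rw [ENNReal.ofReal_sum_of_nonneg (fun P _ => mul_nonneg (hwnn P) (hHnn P _))]
          exact Finset.sum_congr rfl fun P _ => ENNReal.ofReal_mul (hwnn P)
      _ = ∑ P ∈ partitionsInto n s, ∫⁻ ω,
            ENNReal.ofReal ((∏ B ∈ P, ((B.card - 1).factorial : ℝ)) / ((n - 1).factorial : ℝ)) *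
            ENNReal.ofReal
              ((∏ B ∈ P, clusterMarginal k q0 (fun i : Fin n => X i ω) B) /
                clusterMarginal k q0 (fun i : Fin n => X i ω) Finset.univ) ∂μ :=
          lintegral_finset_sum _ (fun P _ => ((hHmeas P).comp hXM).const_mul _)
      _ = _ := Finset.sum_congr rfl fun P _ =>
          lintegral_const_mul _ ((hHmeas P).comp hXM)
  rw [hstep1]
  -- f is the per-partition contribution
  set f : Finset (Finset (Fin n)) → ℝ≥0∞ := fun P =>
    ENNReal.ofReal ((∏ B ∈ P, ((B.card - 1).factorial : ℝ)) / ((n - 1).factorial : ℝ)) *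
    ∫⁻ ω, ENNReal.ofReal
      ((∏ B ∈ P, clusterMarginal k q0 (fun i : Fin n => X i ω) B) /
        clusterMarginal k q0 (fun i : Fin n => X i ω) Finset.univ) ∂μ with hf
  have hsf0 : (s.factorial : ℝ≥0∞) ≠ 0 := Nat.cast_ne_zero.2 (Nat.factorial_ne_zero s)
  have hsft : (s.factorial : ℝ≥0∞) ≠ ⊤ := ENNReal.natCast_ne_top _
  refine (ENNReal.mul_left_strictMono hsf0 hsft).injective ?_
  rw [mul_comm _ (s.factorial : ℝ≥0∞), mul_comm _ (s.factorial : ℝ≥0∞)]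
  rw [← core_comb A hAcard hAdisj f, Finset.mul_sum]
  refine Finset.sum_congr rfl fun a ha => ?_
  obtain ⟨hab, hasum⟩ := mem_compositions.1 ha
  -- per-σ evaluation of f on the permuted partition
  have hCinj : ∀ σ : Equiv.Perm (Fin n), Function.Injective fun j => (A a j).image σ := by
    intro σ j l hjl
    simp only at hjl
    by_contra hne
    have hd : Disjoint ((A a j).image σ) ((A a l).image σ) := by
      rw [Finset.disjoint_image σ.injective]
      exact hAdisj a ha j l hne
    rw [hjl] at hd
    have hnonempty : ((A a l).image σ).Nonempty := by
      rw [← Finset.card_pos, Finset.card_image_of_injective _ σ.injective, hAcard a ha l]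
      exact (hab l).1
    exact hnonempty.ne_empty ((Finset.disjoint_self_iff_empty _).1 hd)
  have hperσ : ∀ σ : Equiv.Perm (Fin n),
      f (Finset.univ.image fun j => (A a j).image σ)
        = ENNReal.ofReal ((∏ j, (((a j) - 1).factorial : ℝ)) / ((n - 1).factorial : ℝ)) *
          ∫⁻ ω, ENNReal.ofReal
            ((∏ j, clusterMarginal k q0 (fun i : Fin n => X i ω) (A a j)) /
              clusterMarginal k q0 (fun i : Fin n => X i ω) Finset.univ) ∂μ := by
    intro σ
    have himgU : (Finset.univ : Finset (Fin n)).image ⇑σ = Finset.univ := by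
      ext i
      simp only [Finset.mem_image, Finset.mem_univ, true_and, iff_true]
      exact ⟨σ.symm i, σ.apply_symm_apply i⟩
    have hw : (∏ B ∈ (Finset.univ.image fun j => (A a j).image σ),
          ((B.card - 1).factorial : ℝ)) = ∏ j, (((a j) - 1).factorial : ℝ) := by
      rw [Finset.prod_image (fun j _ l _ h => hCinj σ h)]
      refine Finset.prod_congr rfl fun j _ => ?_
      rw [Finset.card_image_of_injective _ σ.injective, hAcard a ha j]
    have hHpt : ∀ x : Fin n → ℝ,
        ((∏ B ∈ (Finset.univ.image fun j => (A a j).image σ), clusterMarginal k q0 x B) /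
            clusterMarginal k q0 x Finset.univ)
          = ((∏ j, clusterMarginal k q0 (fun i => x (σ i)) (A a j)) /
              clusterMarginal k q0 (fun i => x (σ i)) Finset.univ) := by
      intro x
      congr 1
      · rw [Finset.prod_image (fun j _ l _ h => hCinj σ h)]
        exact Finset.prod_congr rfl fun j _ => clusterMarginal_relabel k q0 x σ (A a j)
      · rw [← clusterMarginal_relabel k q0 x σ Finset.univ, himgU]
    have hint : (∫⁻ ω, ENNReal.ofReal
          ((∏ B ∈ (Finset.univ.image fun j => (A a j).image σ),
              clusterMarginal k q0 (fun i : Fin n => X i ω) B) /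
            clusterMarginal k q0 (fun i : Fin n => X i ω) Finset.univ) ∂μ)
        = ∫⁻ ω, ENNReal.ofReal
            ((∏ j, clusterMarginal k q0 (fun i : Fin n => X i ω) (A a j)) /
              clusterMarginal k q0 (fun i : Fin n => X i ω) Finset.univ) ∂μ := by
      have hFmeas : Measurable fun x : Fin n → ℝ => ENNReal.ofReal
          ((∏ j, clusterMarginal k q0 x (A a j)) / clusterMarginal k q0 x Finset.univ) :=
        ((Finset.measurable_prod Finset.univ fun j _ => hmB (A a j)).div
          (hmB Finset.univ)).ennreal_ofReal
      calc (∫⁻ ω, ENNReal.ofReal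
            ((∏ B ∈ (Finset.univ.image fun j => (A a j).image σ),
                clusterMarginal k q0 (fun i : Fin n => X i ω) B) /
              clusterMarginal k q0 (fun i : Fin n => X i ω) Finset.univ) ∂μ)
          = ∫⁻ ω, ENNReal.ofReal
              ((∏ j, clusterMarginal k q0 (fun i : Fin n => X (σ i) ω) (A a j)) /
                clusterMarginal k q0 (fun i : Fin n => X (σ i) ω) Finset.univ) ∂μ := by
            refine lintegral_congr fun ω => ?_
            rw [hHpt (fun i : Fin n => X i ω)]
        _ = _ := lintegral_exchange μ X hXm hexch n σ hFmeas
    rw [hf]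
    simp only
    rw [hw, hint]
  have hsumσ : ∀ σ ∈ (Finset.univ : Finset (Equiv.Perm (Fin n))),
      (∏ j, ((a j).factorial : ℝ≥0∞))⁻¹ * f (Finset.univ.image fun j => (A a j).image σ)
        = (∏ j, ((a j).factorial : ℝ≥0∞))⁻¹ *
          (ENNReal.ofReal ((∏ j, (((a j) - 1).factorial : ℝ)) / ((n - 1).factorial : ℝ)) *
          ∫⁻ ω, ENNReal.ofReal
            ((∏ j, clusterMarginal k q0 (fun i : Fin n => X i ω) (A a j)) /
              clusterMarginal k q0 (fun i : Fin n => X i ω) Finset.univ) ∂μ) := by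
    intro σ _
    rw [hperσ σ]
  rw [Finset.sum_congr rfl hsumσ, Finset.sum_const, Finset.card_univ,
    Fintype.card_perm, Fintype.card_fin, nsmul_eq_mul]
  have hcoef := coeff_eq hn a (fun j => (hab j).1)
  generalize (∫⁻ ω, ENNReal.ofReal
      ((∏ j, clusterMarginal k q0 (fun i : Fin n => X i ω) (A a j)) /
        clusterMarginal k q0 (fun i : Fin n => X i ω) Finset.univ) ∂μ) = J
  calc (n.factorial : ℝ≥0∞) * ((∏ j, ((a j).factorial : ℝ≥0∞))⁻¹ *
        (ENNReal.ofReal ((∏ j, (((a j) - 1).factorial : ℝ)) / ((n - 1).factorial : ℝ)) * J))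
      = ((∏ j, ((a j).factorial : ℝ≥0∞))⁻¹ * ((n.factorial : ℝ≥0∞) *
          ENNReal.ofReal ((∏ j, (((a j) - 1).factorial : ℝ)) / ((n - 1).factorial : ℝ)))) * J := by
        ring
    _ = ((s.factorial : ℝ≥0∞) *
          ENNReal.ofReal ((n : ℝ) / ((s.factorial : ℝ) * ∏ j, (a j : ℝ)))) * J := by
        rw [hcoef]
    _ = _ := by ring
end
end

section
/- Let c > 0 and let g be a probability density on ℝ with 0 < m ≤ g(x) ≤ M < ∞ for x ∈ [−c, c] and g(x) = 0 outside [−c, c]. Let t ≥ 1, let θ_1*, …, θ_t* ∈ ℝ satisfy |θ_j* − θ_k*| > 2c for all j ≠ k, let p_1, …, p_t ∈ (0,1) sum to 1, and let X_1, X_2, … be i.i.d. with density f(x) = Σ_{j=1}^t p_j g(x − θ_j*). For each j and each n, let n_j = #{i ≤ n : X_i ∈ [θ_j* − c, θ_j* + c]} and let X^j_{(n_j)} = max{X_i : i ≤ n, X_i ∈ [θ_j* − c, θ_j* + c]} (when n_j ≥ 1). Define Y^j_n = min(1, n_j (log n)^{1/(2t)} (c + θ_j* − X^j_{(n_j)}))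 when n_j ≥ 1, and Y^j_n = 1 when n_j = 0. Then for every j = 1, …, t, Y^j_n → 1 in probability as n → ∞. -/
open MeasureTheory Filter Topology
open scoped Classical BigOperators ENNReal

noncomputable section

/-- The indices `i` among the first `n` whose observation falls in the window
`[θ − c, θ + c]`. -/
def windowIdx (c θ : ℝ) {n : ℕ} (x : Fin n → ℝ) : Finset (Fin n) :=
  Finset.univ.filter fun i => x i ∈ Set.Icc (θ - c) (θ + c)

/-- The statistic `Y^j_n = min(1, n_j (log n)^{1/(2t)} (c + θ_j* − X^j_{(n_j)}))`
(set to `1` when the window is empty), where `n_j` is the number of observations in the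
window `[θ − c, θ + c]` and `X^j_{(n_j)}` their maximum. -/
def Ywindow (c : ℝ) (t : ℕ) (θ : ℝ) (n : ℕ) (x : Fin n → ℝ) : ℝ :=
  if h : (windowIdx c θ x).Nonempty then
    min 1 (((windowIdx c θ x).card : ℝ) * Real.log n ^ ((1 : ℝ) / (2 * t)) *
      (c + θ - (windowIdx c θ x).sup' h x))
  else 1

/-- Lemma S.8 of the paper.
For data i.i.d. from a completely separated mixture of a compactly supported,
bounded-above-and-below location kernel, the rescaled gap between `c + θ_j*` and the
maximum observation of the `j`-th group, capped at one, converges to `1` in probability. -/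
theorem window_maximum_gap_tendsto_one
    (c m M : ℝ) (hc : 0 < c) (hm : 0 < m)
    (g : ℝ → ℝ) (hgmeas : Measurable g) (hgint : (∫ x, g x = 1))
    (hgbd : ∀ x ∈ Set.Icc (-c) c, m ≤ g x ∧ g x ≤ M)
    (hgzero : ∀ x ∉ Set.Icc (-c) c, g x = 0)
    (t : ℕ) (ht : 1 ≤ t) (θs : Fin t → ℝ)
    (hsep : ∀ j k, j ≠ k → 2 * c < |θs j - θs k|)
    (p : Fin t → ℝ) (hp : ∀ j, p j ∈ Set.Ioo (0:ℝ) 1) (hpsum : ∑ j, p j = 1)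
    (Ω : Type) [MeasurableSpace Ω] (μ : Measure Ω) [IsProbabilityMeasure μ]
    (X : ℕ → Ω → ℝ)
    (hX : IsIIDWithDensity Ω μ X (fun x => ∑ j, p j * g (x - θs j))) :
    ∀ j : Fin t,
      TendstoInMeasure μ (fun n ω => Ywindow c t (θs j) n (fun i : Fin n => X i ω))
        atTop (fun _ => 1) := by
  obtain ⟨hXmeas, hXindep, hXmap⟩ := hX
  set f : ℝ → ℝ := fun x => ∑ l, p l * g (x - θs l) with hfdef
  have hc0 : (0:ℝ) ∈ Set.Icc (-c) c := ⟨by linarith, by linarith⟩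
  have hMpos : 0 < M := hm.trans_le ((hgbd 0 hc0).1.trans (hgbd 0 hc0).2)
  have hgnn : ∀ y, 0 ≤ g y := by
    intro y
    by_cases hy : y ∈ Set.Icc (-c) c
    · exact hm.le.trans (hgbd y hy).1
    · rw [hgzero y hy]
  have hgle : ∀ y, g y ≤ M := by
    intro y
    by_cases hy : y ∈ Set.Icc (-c) c
    · exact (hgbd y hy).2
    · rw [hgzero y hy]; exact hMpos.le
  have hfnn : ∀ x, 0 ≤ f x := fun x =>
    Finset.sum_nonneg fun l _ => mul_nonneg (hp l).1.le (hgnn _)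
  have hfle : ∀ x, f x ≤ M := by
    intro x
    calc f x ≤ ∑ l, p l * M :=
          Finset.sum_le_sum fun l _ => mul_le_mul_of_nonneg_left (hgle _) (hp l).1.le
      _ = M := by rw [← Finset.sum_mul, hpsum, one_mul]
  have hgintg : Integrable g volume := by
    by_contra h
    rw [MeasureTheory.integral_undef h] at hgint
    exact one_ne_zero hgint.symm
  intro j
  set θ : ℝ := θs j with hθdef
  set W : Set ℝ := Set.Icc (θ - c) (θ + c) with hWdef
  have hWmeas : MeasurableSet W := measurableSet_Icc
  -- measure of preimages
  have hpre : ∀ (i : ℕ) (S : Set ℝ), MeasurableSet S →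
      μ (X i ⁻¹' S) = ∫⁻ x in S, ENNReal.ofReal (f x) := by
    intro i S hS
    rw [← Measure.map_apply (hXmeas i) hS, hXmap i, withDensity_apply _ hS]
  have hIccBd : ∀ (i : ℕ) (a b : ℝ),
      μ (X i ⁻¹' Set.Icc a b) ≤ ENNReal.ofReal (M * (b - a)) := by
    intro i a b
    rw [hpre i _ measurableSet_Icc]
    calc (∫⁻ x in Set.Icc a b, ENNReal.ofReal (f x))
        ≤ ∫⁻ _ in Set.Icc a b, ENNReal.ofReal M :=
          lintegral_mono fun x => ENNReal.ofReal_le_ofReal (hfle x)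
      _ = ENNReal.ofReal M * volume (Set.Icc a b) := setLIntegral_const _ _
      _ = ENNReal.ofReal M * ENNReal.ofReal (b - a) := by rw [Real.volume_Icc]
      _ = ENNReal.ofReal (M * (b - a)) := (ENNReal.ofReal_mul hMpos.le).symm
  -- the window has probability at least p j
  have hWsub : ∫ x in W, p j * g (x - θ) = p j := by
    rw [MeasureTheory.integral_const_mul]
    have h1 : ∫ x in W, g (x - θ) = ∫ x, g (x - θ) := by
      apply setIntegral_eq_integral_of_forall_compl_eq_zero
      intro x hx
      refine hgzero _ fun hmem => hx ?_
      rw [Set.mem_Icc] at hmem ⊢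
      constructor <;> linarith [hmem.1, hmem.2]
    rw [h1, integral_sub_right_eq_self g θ, hgint, mul_one]
  have hWlb : ENNReal.ofReal (p j) ≤ μ (X 0 ⁻¹' W) := by
    rw [hpre 0 W hWmeas]
    have hint : IntegrableOn (fun x => p j * g (x - θ)) W volume :=
      ((hgintg.comp_sub_right θ).const_mul (p j)).integrableOn
    calc ENNReal.ofReal (p j)
        = ENNReal.ofReal (∫ x in W, p j * g (x - θ)) := by rw [hWsub]
      _ = ∫⁻ x in W, ENNReal.ofReal (p j * g (x - θ)) :=
          ofReal_integral_eq_lintegral_ofReal hint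
            (Eventually.of_forall fun x => mul_nonneg (hp j).1.le (hgnn _))
      _ ≤ ∫⁻ x in W, ENNReal.ofReal (f x) := by
          refine lintegral_mono fun x => ENNReal.ofReal_le_ofReal ?_
          exact Finset.single_le_sum (f := fun l => p l * g (x - θs l))
            (fun l _ => mul_nonneg (hp l).1.le (hgnn _)) (Finset.mem_univ j)
  set q : ℝ := (μ (X 0 ⁻¹' W)).toReal with hqdef
  have hqge : p j ≤ q := by
    have := ENNReal.toReal_mono (measure_ne_top μ _) hWlb
    rwa [ENNReal.toReal_ofReal (hp j).1.le] at this
  have hqpos : 0 < q := lt_of_lt_of_le (hp j).1 hqge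
  -- indicator variables and LLN
  set φ : ℝ → ℝ := W.indicator 1 with hφdef
  have hφmeas : Measurable φ := measurable_one.indicator hWmeas
  set Z : ℕ → Ω → ℝ := fun i ω => φ (X i ω) with hZdef
  have hZmeas : ∀ i, Measurable (Z i) := fun i => hφmeas.comp (hXmeas i)
  have hZint : Integrable (Z 0) μ := by
    refine Integrable.mono' (integrable_const (1:ℝ)) (hZmeas 0).aestronglyMeasurable ?_
    refine Eventually.of_forall fun ω => ?_
    simp only [hZdef, hφdef, Set.indicator_apply, Pi.one_apply]
    split <;> simp
  have hZident : ∀ i, ProbabilityTheory.IdentDistrib (Z i) (Z 0) μ μ := by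
    intro i
    have hXid : ProbabilityTheory.IdentDistrib (X i) (X 0) μ μ :=
      ⟨(hXmeas i).aemeasurable, (hXmeas 0).aemeasurable, by rw [hXmap i, hXmap 0]⟩
    exact hXid.comp hφmeas
  have hZindep : Pairwise (Function.onFun (ProbabilityTheory.IndepFun · · μ) Z) :=
    fun i k hik => (hXindep.indepFun hik).comp hφmeas hφmeas
  have hmean : ∫ ω, Z 0 ω ∂μ = q := by
    have h1 : ∫ ω, Z 0 ω ∂μ = ∫ x, φ x ∂(Measure.map (X 0) μ) :=
      (integral_map (hXmeas 0).aemeasurable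
        (hφmeas.aestronglyMeasurable)).symm
    rw [h1, hφdef, integral_indicator_one hWmeas, measureReal_def,
      Measure.map_apply (hXmeas 0) hWmeas]
  have hSLLN := ProbabilityTheory.strong_law_ae_real Z hZint hZindep hZident
  rw [hmean] at hSLLN
  -- counts equal sums of indicators
  have hcount : ∀ (n : ℕ) (ω : Ω),
      ((windowIdx c θ (fun i : Fin n => X i ω)).card : ℝ) =
        ∑ i ∈ Finset.range n, Z i ω := by
    intro n ω
    rw [windowIdx, Finset.card_filter]
    push_cast
    rw [← Fin.sum_univ_eq_sum_range (fun i => Z i ω) n]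
    refine Finset.sum_congr rfl fun i _ => ?_
    simp only [hZdef, hφdef, Set.indicator_apply, Pi.one_apply, hWdef]
  set V : ℕ → Ω → ℝ :=
    fun n ω => ((windowIdx c θ (fun i : Fin n => X i ω)).card : ℝ) / n with hVdef
  have hVmeas : ∀ n, AEStronglyMeasurable (V n) μ := by
    intro n
    have : V n = fun ω => (∑ i ∈ Finset.range n, Z i ω) / n := by
      funext ω; simp only [hVdef]; rw [hcount n ω]
    rw [this]
    exact ((Finset.measurable_sum _ fun i _ => hZmeas i).div_const _).aestronglyMeasurable
  have hVae : ∀ᵐ ω ∂μ, Tendsto (fun n => V n ω) atTop (𝓝 q) := by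
    filter_upwards [hSLLN] with ω hω
    have : (fun n => V n ω) = fun n => (∑ i ∈ Finset.range n, Z i ω) / n := by
      funext n; simp only [hVdef]; rw [hcount n ω]
    rw [this]
    exact hω
  have hVtim : TendstoInMeasure μ V atTop (fun _ => q) :=
    tendstoInMeasure_of_tendsto_ae hVmeas hVae
  have hA : Tendsto (fun n => μ {ω | q / 2 ≤ dist (V n ω) q}) atTop (𝓝 0) :=
    tendstoInMeasure_iff_dist.mp hVtim (q / 2) (by linarith)
  -- the scaling factor tends to infinity
  set L : ℕ → ℝ := fun n => Real.log n ^ ((1 : ℝ) / (2 * t)) with hLdef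
  have htpos : (0:ℝ) < 1 / (2 * t) := by
    have : (1:ℝ) ≤ t := by exact_mod_cast ht
    positivity
  have hL : Tendsto L atTop atTop :=
    (tendsto_rpow_atTop htpos).comp (Real.tendsto_log_atTop.comp tendsto_natCast_atTop_atTop)
  have hB : Tendsto (fun n => ENNReal.ofReal (2 * M / (q * L n))) atTop (𝓝 0) := by
    have h1 : Tendsto (fun n => 2 * M / (q * L n)) atTop (𝓝 0) :=
      Tendsto.div_atTop tendsto_const_nhds (Tendsto.const_mul_atTop hqpos hL)
    have := ENNReal.tendsto_ofReal h1
    rwa [ENNReal.ofReal_zero] at this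
  -- main estimate
  rw [tendstoInMeasure_iff_dist]
  intro ε hε
  refine tendsto_of_tendsto_of_tendsto_of_le_of_le' tendsto_const_nhds
    (by simpa using hA.add hB) (Eventually.of_forall fun n => zero_le) ?_
  filter_upwards [eventually_ge_atTop 2] with n hn2
  have hnpos : (0:ℝ) < n := by
    have : (2:ℝ) ≤ n := by exact_mod_cast hn2
    linarith
  have hLpos : 0 < L n := by
    rw [hLdef]
    apply Real.rpow_pos_of_pos
    apply Real.log_pos
    exact_mod_cast Nat.lt_of_lt_of_le one_lt_two hn2
  set d : ℝ := 2 / (q * n * L n) with hddef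
  have hdpos : 0 < d := by rw [hddef]; positivity
  -- set inclusion
  have hincl : {ω | ε ≤ dist (Ywindow c t θ n (fun i : Fin n => X i ω)) 1} ⊆
      {ω | q / 2 ≤ dist (V n ω) q} ∪
        ⋃ i : Fin n, X (i : ℕ) ⁻¹' Set.Icc (θ + c - d) (θ + c) := by
    intro ω hω
    simp only [Set.mem_setOf_eq] at hω
    by_cases hAs : q / 2 ≤ dist (V n ω) q
    · exact Or.inl hAs
    · right
      set x : Fin n → ℝ := fun i => X (i : ℕ) ω with hxdef
      by_cases hne : (windowIdx c θ x).Nonempty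
      · set s : Finset (Fin n) := windowIdx c θ x with hsdef
        have hYeq : Ywindow c t θ n x =
            min 1 ((s.card : ℝ) * L n * (c + θ - s.sup' hne x)) := dif_pos hne
        set k : ℝ := (s.card : ℝ) with hkdef
        set D : ℝ := c + θ - s.sup' hne x with hDdef
        have hmemW : ∀ i ∈ s, x i ∈ Set.Icc (θ - c) (θ + c) := by
          intro i hi
          exact (Finset.mem_filter.mp hi).2
        have hsuple : s.sup' hne x ≤ θ + c :=
          Finset.sup'_le hne x fun i hi => (hmemW i hi).2
        have hDnn : 0 ≤ D := by rw [hDdef]; linarith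
        -- k > q * n / 2
        have hVlt : dist (V n ω) q < q / 2 := lt_of_not_ge hAs
        have hkn : q / 2 < k / n := by
          rw [Real.dist_eq, abs_lt] at hVlt
          have : V n ω = k / n := rfl
          rw [this] at hVlt
          linarith [hVlt.1]
        have hk : q * n / 2 < k := by
          rw [div_lt_div_iff₀ (by norm_num) hnpos] at hkn
          linarith
        have hkpos : 0 < k := lt_of_le_of_lt (by positivity) hk
        -- Y small gives gap bound
        have hYle : min 1 (k * L n * D) ≤ 1 - ε := by
          have h1 : Ywindow c t θ n x ≤ 1 := by
            rw [hYeq]; exact min_le_left _ _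
          rw [Real.dist_eq, abs_of_nonpos (by linarith)] at hω
          rw [← hYeq]; linarith
        have hz : k * L n * D ≤ 1 := by
          rcases min_le_iff.mp hYle with h | h
          · linarith
          · linarith
        have hDd : D ≤ d := by
          have hkL : 0 < k * L n := by positivity
          have h1 : D ≤ 1 / (k * L n) := by
            rw [le_div_iff₀ hkL]
            calc D * (k * L n) = k * L n * D := by ring
              _ ≤ 1 := hz
          have h2 : 1 / (k * L n) ≤ d := by
            rw [hddef, div_le_div_iff₀ hkL (by positivity)]
            nlinarith [hLpos, hk]
          linarith
        obtain ⟨i₀, hi₀, hsup⟩ := Finset.exists_mem_eq_sup' hne x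
        refine Set.mem_iUnion.mpr ⟨i₀, ?_⟩
        have hxi : x i₀ = θ + c - D + 0 := by rw [hDdef, hsup]; ring
        refine Set.mem_preimage.mpr (Set.mem_Icc.mpr ⟨?_, ?_⟩)
        · show θ + c - d ≤ X (i₀ : ℕ) ω
          have : X (i₀:ℕ) ω = x i₀ := rfl
          rw [this, hxi]; linarith
        · show X (i₀ : ℕ) ω ≤ θ + c
          exact (hmemW i₀ hi₀).2
      · exfalso
        have : Ywindow c t θ n x = 1 := dif_neg hne
        rw [this, dist_self] at hω
        linarith
  -- measure estimate
  calc μ {ω | ε ≤ dist (Ywindow c t θ n (fun i : Fin n => X i ω)) 1}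
      ≤ μ ({ω | q / 2 ≤ dist (V n ω) q} ∪
          ⋃ i : Fin n, X (i:ℕ) ⁻¹' Set.Icc (θ + c - d) (θ + c)) := measure_mono hincl
    _ ≤ μ {ω | q / 2 ≤ dist (V n ω) q} +
          μ (⋃ i : Fin n, X (i:ℕ) ⁻¹' Set.Icc (θ + c - d) (θ + c)) := measure_union_le _ _
    _ ≤ μ {ω | q / 2 ≤ dist (V n ω) q} + ENNReal.ofReal (2 * M / (q * L n)) := by
        gcongr
        calc μ (⋃ i : Fin n, X (i:ℕ) ⁻¹' Set.Icc (θ + c - d) (θ + c))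
            ≤ ∑' i : Fin n, μ (X (i:ℕ) ⁻¹' Set.Icc (θ + c - d) (θ + c)) := measure_iUnion_le _
          _ = ∑ i : Fin n, μ (X (i:ℕ) ⁻¹' Set.Icc (θ + c - d) (θ + c)) := tsum_fintype _
          _ ≤ ∑ _i : Fin n, ENNReal.ofReal (M * d) := by
              refine Finset.sum_le_sum fun i _ => ?_
              have := hIccBd (i:ℕ) (θ + c - d) (θ + c)
              have harith : θ + c - (θ + c - d) = d := by ring
              rwa [harith] at this
          _ = (n : ℝ≥0∞) * ENNReal.ofReal (M * d) := by
              rw [Finset.sum_const, Finset.card_univ, Fintype.card_fin, nsmul_eq_mul]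
          _ = ENNReal.ofReal ((n : ℝ) * (M * d)) := by
              rw [← ENNReal.ofReal_natCast n, ← ENNReal.ofReal_mul (by positivity)]
          _ = ENNReal.ofReal (2 * M / (q * L n)) := by
              congr 1
              rw [hddef]
              field_simp
end
end

section
/- Let c > 0 and θ* ∈ ℝ, and for x_{1:n} = (x_1,…,x_n) define the marginal likelihood m(x_{1:n}) = (2c)^{−(n+1)} ∫_ℝ ∏_{i=1}^n 𝟙_{(θ−c, θ+c)}(x_i) · 𝟙_{(θ*−c, θ*+c)}(θ) dθ (i.e., the marginal of n observations under the Uniform(θ−c, θ+c) kernel with Uniform(θ*−c, θ*+c) base density). Then for every x_{1:n} ∈ [θ*−c, θ*+c]^n, m(x_{1:n}) = (2c − (max(x_1,…,x_n,θ*) − min(x_1,…,x_n,θ*)))/(2c)^{n+1}. -/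
open MeasureTheory
open scoped Classical BigOperators

/-- Lemma S.15 of the paper.
The marginal likelihood of `n` observations under the `Unif(θ−c,θ+c)` kernel with
`Unif(θ*−c,θ*+c)` base density: for `x_{1:n} ∈ [θ*−c, θ*+c]^n`,
`m(x_{1:n}) = (2c − (max(x_{1:n},θ*) − min(x_{1:n},θ*)))/(2c)^{n+1}`. -/
theorem uniform_marginal_likelihood
    (c θstar : ℝ) (hc : 0 < c) (n : ℕ) (hn : 1 ≤ n) (x : Fin n → ℝ)
    (hx : ∀ i, x i ∈ Set.Icc (θstar - c) (θstar + c)) :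
    ((2 * c) ^ (n + 1))⁻¹ *
        ∫ θ : ℝ, (∏ i, Set.indicator (Set.Ioo (θ - c) (θ + c)) (fun _ => (1:ℝ)) (x i)) *
          Set.indicator (Set.Ioo (θstar - c) (θstar + c)) (fun _ => (1:ℝ)) θ
      = (2 * c -
          (max (Finset.univ.sup' (Finset.univ_nonempty_iff.mpr
              (Fin.pos_iff_nonempty.mp hn)) x) θstar -
           min (Finset.univ.inf' (Finset.univ_nonempty_iff.mpr
              (Fin.pos_iff_nonempty.mp hn)) x) θstar)) / (2 * c) ^ (n + 1) := by
  have hne : (Finset.univ : Finset (Fin n)).Nonempty :=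
    Finset.univ_nonempty_iff.mpr (Fin.pos_iff_nonempty.mp hn)
  set S := Finset.univ.sup' hne x with hS
  set I := Finset.univ.inf' hne x with hI
  set M := max S θstar with hM
  set m := min I θstar with hm
  -- pointwise identity
  have key : ∀ θ : ℝ,
      (∏ i, Set.indicator (Set.Ioo (θ - c) (θ + c)) (fun _ => (1:ℝ)) (x i)) *
        Set.indicator (Set.Ioo (θstar - c) (θstar + c)) (fun _ => (1:ℝ)) θ
      = Set.indicator (Set.Ioo (M - c) (m + c)) (fun _ => (1:ℝ)) θ := by
    intro θ
    by_cases h : θ ∈ Set.Ioo (M - c) (m + c)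
    · obtain ⟨h1, h2⟩ := id h
      have hprod : ∀ i ∈ Finset.univ, Set.indicator (Set.Ioo (θ - c) (θ + c))
          (fun _ => (1:ℝ)) (x i) = 1 := by
        intro i _
        have hxl : θ - c < x i := by
          have : θ < I + c := lt_of_lt_of_le h2 (by
            have : m ≤ I := min_le_left _ _
            linarith)
          have hIx : I ≤ x i := Finset.inf'_le x (Finset.mem_univ i)
          linarith
        have hxr : x i < θ + c := by
          have hxS : x i ≤ S := Finset.le_sup' x (Finset.mem_univ i)
          have : S ≤ M := le_max_left _ _
          linarith
        simp [Set.indicator_of_mem, Set.mem_Ioo, hxl, hxr]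
      have hθ : θ ∈ Set.Ioo (θstar - c) (θstar + c) := by
        constructor
        · have : θstar ≤ M := le_max_right _ _
          linarith
        · have : m ≤ θstar := min_le_right _ _
          linarith
      rw [Finset.prod_eq_one hprod, Set.indicator_of_mem hθ,
        Set.indicator_of_mem h]
      ring
    · rw [Set.indicator_of_notMem h]
      rw [Set.mem_Ioo, not_and_or, not_lt, not_lt] at h
      rcases h with h | h
      · -- θ ≤ M - c
        rcases max_cases S θstar with ⟨hMe, _⟩ | ⟨hMe, _⟩
        · -- M = S : some x i ≥ θ + c
          obtain ⟨i, _, hi⟩ := Finset.exists_mem_eq_sup' hne x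
          have : ¬ x i ∈ Set.Ioo (θ - c) (θ + c) := by
            rw [Set.mem_Ioo]; push_neg; intro _
            have hMS : M = S := hM.trans hMe
            have := Finset.le_sup' x (Finset.mem_univ i)
            rw [← hi]; linarith
          rw [Finset.prod_eq_zero (Finset.mem_univ i)
            (Set.indicator_of_notMem this _), zero_mul]
        · have : ¬ θ ∈ Set.Ioo (θstar - c) (θstar + c) := by
            rw [Set.mem_Ioo]; push_neg; intro h'
            have hMS : M = θstar := hM.trans hMe
            linarith
          rw [Set.indicator_of_notMem this, mul_zero]
      · -- m + c ≤ θ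
        rcases min_cases I θstar with ⟨hme, _⟩ | ⟨hme, _⟩
        · obtain ⟨i, _, hi⟩ := Finset.exists_mem_eq_inf' hne x
          have : ¬ x i ∈ Set.Ioo (θ - c) (θ + c) := by
            rw [Set.mem_Ioo]; push_neg; intro h'
            exfalso
            have hmI : m = I := hm.trans hme
            rw [← hi] at h'
            linarith
          rw [Finset.prod_eq_zero (Finset.mem_univ i)
            (Set.indicator_of_notMem this _), zero_mul]
        · have : ¬ θ ∈ Set.Ioo (θstar - c) (θstar + c) := by
            rw [Set.mem_Ioo]; push_neg; intro _
            have hmI : m = θstar := hm.trans hme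
            linarith
          rw [Set.indicator_of_notMem this, mul_zero]
  have hint : (∫ θ : ℝ, (∏ i, Set.indicator (Set.Ioo (θ - c) (θ + c))
      (fun _ => (1:ℝ)) (x i)) *
        Set.indicator (Set.Ioo (θstar - c) (θstar + c)) (fun _ => (1:ℝ)) θ)
      = (m + c) - (M - c) := by
    simp_rw [key]
    have hMm : 0 ≤ (m + c) - (M - c) := by
      have h1 : M ≤ θstar + c := by
        apply max_le _ (by linarith)
        refine Finset.sup'_le hne x fun i _ => (hx i).2
      have h2 : θstar - c ≤ m := by
        apply le_min _ (by linarith)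
        refine Finset.le_inf' hne x fun i _ => (hx i).1
      linarith
    rw [show (fun θ : ℝ => Set.indicator (Set.Ioo (M - c) (m + c))
        (fun _ => (1:ℝ)) θ) = Set.indicator (Set.Ioo (M - c) (m + c)) 1 from rfl]
    rw [MeasureTheory.integral_indicator_one measurableSet_Ioo,
      measureReal_def, Real.volume_Ioo, ENNReal.toReal_ofReal hMm]
  rw [hint]
  have hpow : (2 * c) ^ (n + 1) ≠ 0 := by positivity
  field_simp
  ring
end
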